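/- arXiv:2205.07415 — 5 statements merged into one kernel-verified Lean document; each statement's English description precedes it below -/
import Mathlib

section
/- For any δ > 0, y > 0 and α ∈ (0,1), we have ∫₀^∞ [(y+z)^{-δ} - y^{-δ}] z^{-1-α} dz = -δ · α^{-1} B(α+δ, 1-α) · y^{-α-δ}, where B denotes the Beta function. -/
open MeasureTheory

open Real Set Filter Topology in
private lemma stmt0_aux (δ y α : ℝ) (hδ : 0 < δ) (hy : 0 < y) (hα0 : 0 < α) (hα1 : α < 1) :
    IntegrableOn (fun z : ℝ => ((y + z) ^ (-δ) - y ^ (-δ)) * z ^ (-1 - α)) (Ioi 0) ∧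
    IntegrableOn (fun z : ℝ => (y + z) ^ (-δ - 1) * z ^ (-α)) (Ioi 0) := by
  have hder1 : ∀ z : ℝ, 0 ≤ z → HasDerivAt (fun x : ℝ => (y + x) ^ (-δ))
      (-δ * (y + z) ^ (-δ - 1)) z := by
    intro z hz
    have hyz : y + z ≠ 0 := by positivity
    simpa using ((hasDerivAt_id' z).const_add y).rpow_const (p := -δ) (Or.inl hyz)
  have hmvt : ∀ z : ℝ, 0 ≤ z → |(y + z) ^ (-δ) - y ^ (-δ)| ≤ δ * y ^ (-δ - 1) * z := by
    intro z hz
    have := Convex.norm_image_sub_le_of_norm_hasDerivWithin_le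
      (f := fun x : ℝ => (y + x) ^ (-δ)) (f' := fun x => -δ * (y + x) ^ (-δ - 1))
      (s := Ici (0:ℝ)) (C := δ * y ^ (-δ - 1))
      (fun x hx => (hder1 x hx).hasDerivWithinAt) ?_ (convex_Ici 0) self_mem_Ici hz
    · simpa [abs_of_nonneg hz] using this
    · intro x hx
      rw [Real.norm_eq_abs, abs_mul, abs_neg, abs_of_nonneg hδ.le,
        abs_of_nonneg (Real.rpow_nonneg (add_nonneg hy.le hx) _)]
      have : (y + x) ^ (-δ - 1) ≤ y ^ (-δ - 1) :=
        Real.rpow_le_rpow_of_nonpos hy (by simpa using hx) (by linarith)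
      nlinarith
  constructor
  · have hmeas : AEStronglyMeasurable (fun z : ℝ => ((y + z) ^ (-δ) - y ^ (-δ)) * z ^ (-1 - α))
        (volume.restrict (Ioi (0:ℝ))) :=
      ((((measurable_const.add measurable_id).pow_const (-δ)).sub measurable_const).mul
        (measurable_id.pow_const (-1 - α))).aestronglyMeasurable
    rw [← Ioc_union_Ioi_eq_Ioi (zero_le_one' ℝ)]
    apply IntegrableOn.union
    · have hbound : IntegrableOn (fun z : ℝ => δ * y ^ (-δ - 1) * z ^ (-α)) (Ioc 0 1) :=
        (intervalIntegral.intervalIntegrable_rpow' (a := 0) (b := 1) (r := -α)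
          (by linarith)).1.const_mul _
      refine Integrable.mono' hbound (hmeas.mono_measure
        (Measure.restrict_mono Ioc_subset_Ioi_self le_rfl)) ?_
      filter_upwards [ae_restrict_mem measurableSet_Ioc] with z hz
      have hz0 : 0 < z := hz.1
      rw [Real.norm_eq_abs, abs_mul, abs_of_nonneg (by positivity : (0:ℝ) ≤ z ^ (-1 - α))]
      calc |(y + z) ^ (-δ) - y ^ (-δ)| * z ^ (-1 - α)
          ≤ (δ * y ^ (-δ - 1) * z) * z ^ (-1 - α) := by
            exact mul_le_mul_of_nonneg_right (hmvt z hz0.le) (by positivity)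
        _ = δ * y ^ (-δ - 1) * z ^ (-α) := by
            have : z * z ^ (-1 - α) = z ^ (-α) := by
              nth_rewrite 1 [← Real.rpow_one z]
              rw [← Real.rpow_add hz0]; ring_nf
            rw [mul_assoc (δ * y ^ (-δ - 1)), this]
    · have hbound : IntegrableOn (fun z : ℝ => y ^ (-δ) * z ^ (-1 - α)) (Ioi 1) :=
        (integrableOn_Ioi_rpow_of_lt (by linarith) one_pos).const_mul _
      refine Integrable.mono' hbound (hmeas.mono_measure
        (Measure.restrict_mono (Ioi_subset_Ioi zero_le_one) le_rfl)) ?_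
      filter_upwards [ae_restrict_mem measurableSet_Ioi] with z hz
      have hz0 : (0:ℝ) < z := lt_trans one_pos hz
      rw [Real.norm_eq_abs, abs_mul, abs_of_nonneg (by positivity : (0:ℝ) ≤ z ^ (-1 - α))]
      apply mul_le_mul_of_nonneg_right _ (by positivity)
      rw [abs_sub_comm, abs_of_nonneg (by
        have : (y + z) ^ (-δ) ≤ y ^ (-δ) :=
          Real.rpow_le_rpow_of_nonpos hy (by linarith) (by linarith)
        linarith)]
      have : (0:ℝ) < (y + z) ^ (-δ) := by positivity
      linarith [Real.rpow_le_rpow_of_nonpos hy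
        (le_add_of_nonneg_right hz0.le : y ≤ y + z) (neg_nonpos.mpr hδ.le)]
  · have hmeas : ∀ p q : ℝ, AEStronglyMeasurable (fun z : ℝ => (y + z) ^ p * z ^ q)
        (volume.restrict (Ioi (0:ℝ))) :=
      fun p q => (((measurable_const.add measurable_id).pow_const p).mul
        (measurable_id.pow_const q)).aestronglyMeasurable
    rw [← Ioc_union_Ioi_eq_Ioi (zero_le_one' ℝ)]
    apply IntegrableOn.union
    · have hbound : IntegrableOn (fun z : ℝ => y ^ (-δ - 1) * z ^ (-α)) (Ioc 0 1) :=
        (intervalIntegral.intervalIntegrable_rpow' (a := 0) (b := 1) (r := -α)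
          (by linarith)).1.const_mul _
      refine Integrable.mono' hbound ((hmeas _ _).mono_measure
        (Measure.restrict_mono Ioc_subset_Ioi_self le_rfl)) ?_
      filter_upwards [ae_restrict_mem measurableSet_Ioc] with z hz
      have hz0 : 0 < z := hz.1
      rw [Real.norm_eq_abs, abs_of_nonneg (by positivity)]
      apply mul_le_mul_of_nonneg_right _ (by positivity)
      exact Real.rpow_le_rpow_of_nonpos hy (by linarith) (by linarith)
    · have hbound : IntegrableOn (fun z : ℝ => z ^ (-δ - 1 - α)) (Ioi 1) :=
        integrableOn_Ioi_rpow_of_lt (by linarith) one_pos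
      refine Integrable.mono' hbound ((hmeas _ _).mono_measure
        (Measure.restrict_mono (Ioi_subset_Ioi zero_le_one) le_rfl)) ?_
      filter_upwards [ae_restrict_mem measurableSet_Ioi] with z hz
      have hz0 : (0:ℝ) < z := lt_trans one_pos hz
      rw [Real.norm_eq_abs, abs_of_nonneg (by positivity)]
      calc (y + z) ^ (-δ - 1) * z ^ (-α) ≤ z ^ (-δ - 1) * z ^ (-α) := by
            apply mul_le_mul_of_nonneg_right _ (by positivity)
            exact Real.rpow_le_rpow_of_nonpos hz0 (by linarith) (by linarith)
        _ = z ^ (-δ - 1 - α) := by rw [← Real.rpow_add hz0]; ring_nf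

noncomputable def realBeta (p q : ℝ) : ℝ :=
  ∫ t in (0:ℝ)..1, t ^ (p - 1) * (1 - t) ^ (q - 1)

open Real Set Filter Topology in
theorem stmt0 (δ y α : ℝ) (hδ : 0 < δ) (hy : 0 < y) (hα : α ∈ Set.Ioo (0:ℝ) 1) :
    ∫ z in Set.Ioi (0:ℝ), ((y + z) ^ (-δ) - y ^ (-δ)) * z ^ (-1 - α)
      = -δ * (α⁻¹ * realBeta (α + δ) (1 - α)) * y ^ (-α - δ) := by
  obtain ⟨hα0, hα1⟩ := hα
  have hα0' : α ≠ 0 := hα0.ne'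
  obtain ⟨hIint, hgint⟩ := stmt0_aux δ y α hδ hy hα0 hα1
  have hder1 : ∀ z : ℝ, 0 ≤ z → HasDerivAt (fun x : ℝ => (y + x) ^ (-δ))
      (-δ * (y + z) ^ (-δ - 1)) z := by
    intro z hz
    have hyz : y + z ≠ 0 := by positivity
    simpa using ((hasDerivAt_id' z).const_add y).rpow_const (p := -δ) (Or.inl hyz)
  -- Step 1 : integration by parts (FTC on (0,∞))
  have hFTC : (∫ z in Ioi (0:ℝ), (((y + z) ^ (-δ) - y ^ (-δ)) * z ^ (-1 - α)
      + (δ / α) * ((y + z) ^ (-δ - 1) * z ^ (-α)))) = 0 := by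
    set F : ℝ → ℝ := fun z => -(((y + z) ^ (-δ) - y ^ (-δ)) * z ^ (-α)) / α with hF
    have hderiv : ∀ z ∈ Ioi (0:ℝ), HasDerivAt F
        (((y + z) ^ (-δ) - y ^ (-δ)) * z ^ (-1 - α)
          + (δ / α) * ((y + z) ^ (-δ - 1) * z ^ (-α))) z := by
      intro z hz
      have hz0 : (0:ℝ) < z := hz
      have h2 : HasDerivAt (fun x : ℝ => x ^ (-α)) (-α * z ^ (-α - 1)) z := by
        simpa using Real.hasDerivAt_rpow_const (x := z) (p := -α) (Or.inl hz0.ne')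
      have h := ((((hder1 z hz0.le).sub_const (y ^ (-δ))).mul h2).neg).div_const α
      refine h.congr_deriv ?_
      have e1 : (-1 - α : ℝ) = -α - 1 := by ring
      rw [e1]
      field_simp
      ring
    have hcont : ContinuousWithinAt F (Ici 0) 0 := by
      rw [← Set.Ioi_insert, continuousWithinAt_insert_self]
      have hF0 : F 0 = 0 := by simp [hF]
      rw [ContinuousWithinAt, hF0]
      have hslope : Tendsto (fun z : ℝ => ((y + z) ^ (-δ) - y ^ (-δ)) / z) (𝓝[>] 0)
          (𝓝 (-δ * y ^ (-δ - 1))) := by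
        have h := (hasDerivAt_iff_tendsto_slope.mp (hder1 0 le_rfl)).mono_left
          (nhdsWithin_mono 0 (fun x hx => ne_of_gt hx : Ioi (0:ℝ) ⊆ {0}ᶜ))
        have h' : Tendsto (slope (fun x : ℝ => (y + x) ^ (-δ)) 0) (𝓝[>] 0)
            (𝓝 (-δ * y ^ (-δ - 1))) := by simpa using h
        refine h'.congr' ?_
        filter_upwards [self_mem_nhdsWithin] with z hz
        simp [slope_def_field, div_eq_inv_mul, add_zero]
      have hpow : Tendsto (fun z : ℝ => z ^ (1 - α)) (𝓝[>] 0) (𝓝 0) := by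
        have : ContinuousAt (fun z : ℝ => z ^ (1 - α)) 0 :=
          (Real.continuousAt_rpow_const 0 (1 - α) (Or.inr (by linarith)))
        have h0 : (0:ℝ) ^ (1 - α) = 0 := Real.zero_rpow (by linarith)
        simpa [h0] using this.tendsto.mono_left (nhdsWithin_le_nhds : 𝓝[>] (0:ℝ) ≤ 𝓝 0)
      have hmain : Tendsto (fun z : ℝ =>
          -((((y + z) ^ (-δ) - y ^ (-δ)) / z) * z ^ (1 - α)) / α) (𝓝[>] 0) (𝓝 0) := by
        have := ((hslope.mul hpow).neg).div_const α
        simpa using this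
      refine hmain.congr' ?_
      filter_upwards [self_mem_nhdsWithin] with z hz
      have hz0 : (0:ℝ) < z := hz
      have : z ^ (1 - α) = z * z ^ (-α) := by
        nth_rewrite 2 [← Real.rpow_one z]
        rw [← Real.rpow_add hz0]; ring_nf
      have e2 : ((y + z) ^ (-δ) - y ^ (-δ)) / z * (z * z ^ (-α))
          = ((y + z) ^ (-δ) - y ^ (-δ)) * z ^ (-α) := by
        field_simp
      rw [this, e2]
    have hatTop : Tendsto F atTop (𝓝 0) := by
      have h1 : Tendsto (fun z : ℝ => (y + z) ^ (-δ)) atTop (𝓝 0) :=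
        (tendsto_rpow_neg_atTop hδ).comp (tendsto_atTop_add_const_left _ y tendsto_id)
      have h2 : Tendsto (fun z : ℝ => z ^ (-α)) atTop (𝓝 0) := tendsto_rpow_neg_atTop hα0
      have := (((h1.sub_const (y ^ (-δ))).mul h2).neg).div_const α
      simpa using this
    have := integral_Ioi_of_hasDerivAt_of_tendsto hcont hderiv
      (hIint.add (hgint.const_mul _)) hatTop
    rw [this]
    simp [hF]
  -- Step 2 : the Beta integral via the substitution z = y/t - y
  have hJ : ∫ z in Ioi (0:ℝ), (y + z) ^ (-δ - 1) * z ^ (-α)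
      = y ^ (-α - δ) * realBeta (α + δ) (1 - α) := by
    set φ : ℝ → ℝ := fun t => y / t - y with hφ
    have himg : φ '' Ioo 0 1 = Ioi 0 := by
      ext z
      constructor
      · rintro ⟨t, ⟨ht0, ht1⟩, rfl⟩
        have : y < y / t := by
          rw [lt_div_iff₀ ht0]
          nlinarith
        simp only [mem_Ioi, hφ]
        linarith
      · intro hz
        have hz0 : (0:ℝ) < z := hz
        refine ⟨y / (y + z), ⟨by positivity, ?_⟩, ?_⟩
        · rw [div_lt_one (by positivity)]; linarith
        · simp only [hφ]
          rw [div_div_eq_mul_div, mul_comm, mul_div_assoc, div_self hy.ne', mul_one]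
          ring
    have hderivφ : ∀ t ∈ Ioo (0:ℝ) 1, HasDerivWithinAt φ (-(y / t ^ 2)) (Ioo 0 1) t := by
      intro t ht
      have h := ((hasDerivAt_inv ht.1.ne').const_mul y).sub_const y
      have e : φ = fun t => y * t⁻¹ - y := by
        funext s; simp [hφ, div_eq_mul_inv]
      rw [e]
      refine h.hasDerivWithinAt.congr_deriv ?_
      ring
    have hinj : InjOn φ (Ioo 0 1) := by
      intro a ha b hb hab
      simp only [hφ] at hab
      have : y / a = y / b := by linarith
      rw [div_eq_div_iff ha.1.ne' hb.1.ne'] at this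
      exact (mul_left_cancel₀ hy.ne' this).symm
    have hsub := integral_image_eq_integral_abs_deriv_smul measurableSet_Ioo hderivφ hinj
      (fun z => (y + z) ^ (-δ - 1) * z ^ (-α))
    rw [himg] at hsub
    rw [hsub]
    have hptwise : ∀ t ∈ Ioo (0:ℝ) 1,
        |(-(y / t ^ 2))| • ((y + φ t) ^ (-δ - 1) * (φ t) ^ (-α))
          = y ^ (-α - δ) * (t ^ (α + δ - 1) * (1 - t) ^ ((1 - α) - 1)) := by
      intro t ⟨ht0, ht1⟩
      have h1t : (0:ℝ) < 1 - t := by linarith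
      have e1 : y + φ t = y / t := by simp only [hφ]; ring
      have e2 : φ t = y * (1 - t) / t := by simp only [hφ]; field_simp
      rw [e1, e2, abs_neg, abs_of_pos (by positivity), smul_eq_mul]
      have A : (y / t) ^ (-δ - 1) = y ^ (-δ - 1) * t ^ (δ + 1) := by
        rw [Real.div_rpow hy.le ht0.le, show (-δ - 1 : ℝ) = -(δ + 1) by ring,
          Real.rpow_neg ht0.le, div_eq_mul_inv, inv_inv]
      have B : (y * (1 - t) / t) ^ (-α) = y ^ (-α) * (1 - t) ^ (-α) * t ^ α := by
        rw [Real.div_rpow (by positivity) ht0.le, Real.mul_rpow hy.le h1t.le,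
          Real.rpow_neg ht0.le, div_eq_mul_inv, inv_inv]
      have C : y * y ^ (-δ - 1) * y ^ (-α) = y ^ (-α - δ) := by
        nth_rewrite 1 [← Real.rpow_one y]
        rw [← Real.rpow_add hy, ← Real.rpow_add hy]
        congr 1; ring
      have ht2 : t ^ (2:ℕ) = t ^ (2:ℝ) := by
        rw [← Real.rpow_natCast t 2]; norm_num
      have D : t ^ (δ + 1) * t ^ α / t ^ (2:ℕ) = t ^ (α + δ - 1) := by
        rw [ht2, ← Real.rpow_add ht0, ← Real.rpow_sub ht0]
        congr 1; ring
      have final : y / t ^ (2:ℕ) * (y ^ (-δ - 1) * t ^ (δ + 1)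
            * (y ^ (-α) * (1 - t) ^ (-α) * t ^ α))
          = (y * y ^ (-δ - 1) * y ^ (-α)) * (t ^ (δ + 1) * t ^ α / t ^ (2:ℕ))
            * (1 - t) ^ (-α) := by
        ring
      rw [A, B, final, C, D, show ((1:ℝ) - α) - 1 = -α by ring]
      ring
    rw [setIntegral_congr_fun measurableSet_Ioo hptwise]
    rw [integral_const_mul]
    congr 1
    rw [realBeta, intervalIntegral.integral_of_le zero_le_one,
      ← integral_Ioc_eq_integral_Ioo]
  -- Step 3 : combine
  rw [integral_add hIint (hgint.const_mul _), MeasureTheory.integral_const_mul, hJ] at hFTC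
  linear_combination hFTC
end

section
/- Let δ > 0 and g(y) = exp(-y^{-δ}). For any constants ā > 0, α ∈ (0,1) and A > 0, and all y > 0: ∫_A^∞ [g(y+z) - g(y)] ā z^{-1-α} dz ≥ g(y) δ ā c_{α,δ} y^{-α-δ} - g(y) δ ā (1-α)^{-1} A^{1-α} y^{-1-δ}, where c_{α,δ} = α^{-1} B(α+δ, 1-α). -/
open MeasureTheory

open Set Real Filter Topology

lemma beta_cov {y α δ : ℝ} (hy : 0 < y) (hα0 : 0 < α) (hα1 : α < 1) (hδ : 0 < δ) :
    ∫ u in Set.Ioi (0:ℝ), u ^ (-α) * (y + u) ^ (-δ - 1)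
      = y ^ (-α - δ) * realBeta (α + δ) (1 - α) := by
  set f : ℝ → ℝ := fun t => y * t / (1 - t) with hf
  have himg : f '' Set.Ioo 0 1 = Set.Ioi 0 := by
    ext u
    simp only [Set.mem_image, Set.mem_Ioo, Set.mem_Ioi, hf]
    constructor
    · rintro ⟨t, ⟨ht0, ht1⟩, rfl⟩
      have : (0:ℝ) < 1 - t := by linarith
      positivity
    · intro hu
      refine ⟨u / (y + u), ⟨by positivity, ?_⟩, ?_⟩
      · rw [div_lt_one (by positivity)]; linarith
      · rw [show (1:ℝ) - u / (y + u) = y / (y + u) by field_simp; ring]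
        field_simp
  have hderiv : ∀ t ∈ Set.Ioo (0:ℝ) 1, HasDerivWithinAt f (y / (1 - t) ^ 2) (Set.Ioo 0 1) t := by
    intro t ht
    have h1 : (1:ℝ) - t ≠ 0 := by rcases ht with ⟨_, h⟩; intro hc; linarith [sub_eq_zero.mp hc]
    have h' := (((hasDerivAt_id t).const_mul y).div (((hasDerivAt_id t).const_sub 1)) h1)
    simp only [id_eq, mul_one] at h'
    refine (h'.congr_deriv ?_).hasDerivWithinAt
    ring
  have hinj : Set.InjOn f (Set.Ioo 0 1) := by
    intro s hs t ht h
    have hs1 : (0:ℝ) < 1 - s := by rcases hs with ⟨_, h'⟩; linarith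
    have ht1 : (0:ℝ) < 1 - t := by rcases ht with ⟨_, h'⟩; linarith
    simp only [hf] at h
    rw [div_eq_div_iff hs1.ne' ht1.ne'] at h
    nlinarith [h]
  have cov := MeasureTheory.integral_image_eq_integral_abs_deriv_smul measurableSet_Ioo hderiv
    hinj (fun u => u ^ (-α) * (y + u) ^ (-δ - 1))
  rw [himg] at cov
  rw [cov]
  have hpt : ∀ t ∈ Set.Ioo (0:ℝ) 1,
      |y / (1 - t) ^ 2| • ((f t) ^ (-α) * (y + f t) ^ (-δ - 1))
        = y ^ (-α - δ) * (t ^ (-α) * (1 - t) ^ (α + δ - 1)) := by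
    intro t ⟨ht0, ht1⟩
    have h1 : (0:ℝ) < 1 - t := by linarith
    have key : y + y * t / (1 - t) = y / (1 - t) := by field_simp; ring
    rw [smul_eq_mul, hf]
    simp only
    rw [key, abs_of_pos (by positivity)]
    rw [Real.div_rpow (by positivity) h1.le, Real.div_rpow hy.le h1.le,
      Real.mul_rpow hy.le ht0.le, ← Real.rpow_natCast (1 - t) 2]
    nth_rewrite 1 [← Real.rpow_one y]
    simp only [Real.rpow_def_of_pos hy, Real.rpow_def_of_pos ht0, Real.rpow_def_of_pos h1,
      div_eq_mul_inv, ← Real.exp_neg, ← Real.exp_add, Real.exp_eq_exp]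
    push_cast
    ring
  rw [MeasureTheory.setIntegral_congr_fun measurableSet_Ioo hpt, MeasureTheory.integral_const_mul]
  congr 1
  have : realBeta (α + δ) (1 - α) = ∫ t in (0:ℝ)..1, t ^ (α + δ - 1) * (1 - t) ^ (-α) := by
    unfold realBeta
    norm_num
  rw [this,
    show (∫ t in (0:ℝ)..1, t ^ (α + δ - 1) * (1 - t) ^ (-α))
        = ∫ t in (0:ℝ)..1, (1 - t) ^ (α + δ - 1) * (1 - (1 - t)) ^ (-α) from by
      rw [intervalIntegral.integral_comp_sub_left (fun s => s ^ (α + δ - 1) * (1 - s) ^ (-α)) 1]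
      norm_num]
  rw [intervalIntegral.integral_of_le zero_le_one, MeasureTheory.integral_Ioc_eq_integral_Ioo]
  apply MeasureTheory.setIntegral_congr_fun measurableSet_Ioo
  intro t ht
  simp only [sub_sub_cancel]
  ring

section helpers
variable {y δ α A : ℝ}

lemma cont_G2 (hy : 0 < y) : ContinuousOn (fun u : ℝ => u ^ (-α) * (y + u) ^ (-δ - 1)) (Ioi 0) := by
  apply ContinuousOn.mul
  · exact continuousOn_id.rpow_const (fun x hx => Or.inl (ne_of_gt hx))
  · exact (continuousOn_const.add continuousOn_id).rpow_const
      (fun x hx => Or.inl (ne_of_gt (by have : 0 < x := hx; show (0:ℝ) < y + x; linarith)))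

lemma int_G2_Ioc (hy : 0 < y) (hα0 : 0 < α) (hα1 : α < 1) (hδ : 0 < δ) (hA : 0 < A) :
    IntegrableOn (fun u : ℝ => u ^ (-α) * (y + u) ^ (-δ - 1)) (Ioc 0 A) := by
  have hb : IntegrableOn (fun u : ℝ => y ^ (-δ - 1) * u ^ (-α)) (Ioc 0 A) := by
    apply Integrable.const_mul
    exact (intervalIntegrable_iff_integrableOn_Ioc_of_le hA.le).mp
      (intervalIntegral.intervalIntegrable_rpow' (by linarith))
  apply Integrable.mono' hb
  · exact ((cont_G2 hy).mono Ioc_subset_Ioi_self).aestronglyMeasurable measurableSet_Ioc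
  · filter_upwards [ae_restrict_mem measurableSet_Ioc] with u hu
    have hu0 : 0 < u := hu.1
    rw [Real.norm_eq_abs, abs_of_nonneg (by positivity), mul_comm (y ^ (-δ - 1))]
    apply mul_le_mul_of_nonneg_left _ (by positivity)
    exact Real.rpow_le_rpow_of_nonpos hy (by linarith) (by linarith)

lemma int_G2_Ioi (hy : 0 < y) (hα0 : 0 < α) (hδ : 0 < δ) (hA : 0 < A) :
    IntegrableOn (fun u : ℝ => u ^ (-α) * (y + u) ^ (-δ - 1)) (Ioi A) := by
  have hb : IntegrableOn (fun u : ℝ => u ^ (-α + (-δ - 1))) (Ioi A) :=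
    integrableOn_Ioi_rpow_of_lt (by linarith) hA
  apply Integrable.mono' hb
  · exact ((cont_G2 hy).mono (Ioi_subset_Ioi hA.le)).aestronglyMeasurable measurableSet_Ioi
  · filter_upwards [ae_restrict_mem measurableSet_Ioi] with u hu
    have hu0 : 0 < u := hA.trans hu
    rw [Real.norm_eq_abs, abs_of_nonneg (by positivity), Real.rpow_add hu0]
    apply mul_le_mul_of_nonneg_left _ (by positivity)
    exact Real.rpow_le_rpow_of_nonpos hu0 (by linarith) (by linarith)

lemma int_G2_Ioi0 (hy : 0 < y) (hα0 : 0 < α) (hα1 : α < 1) (hδ : 0 < δ) :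
    IntegrableOn (fun u : ℝ => u ^ (-α) * (y + u) ^ (-δ - 1)) (Ioi 0) := by
  rw [← Set.Ioc_union_Ioi_eq_Ioi (le_of_lt one_pos)]
  exact (int_G2_Ioc hy hα0 hα1 hδ one_pos).union (int_G2_Ioi hy hα0 hδ one_pos)

lemma int_G1_Ioi (hy : 0 < y) (hα0 : 0 < α) (hδ : 0 < δ) (hA : 0 < A) :
    IntegrableOn (fun z : ℝ => (y ^ (-δ) - (y + z) ^ (-δ)) * z ^ (-1 - α)) (Ioi A) := by
  have hb : IntegrableOn (fun z : ℝ => y ^ (-δ) * z ^ (-1 - α)) (Ioi A) :=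
    (integrableOn_Ioi_rpow_of_lt (by linarith) hA).const_mul _
  apply Integrable.mono' hb
  · apply ContinuousOn.aestronglyMeasurable _ measurableSet_Ioi
    apply ContinuousOn.mul
    · exact continuousOn_const.sub ((continuousOn_const.add continuousOn_id).rpow_const
        (fun x hx => Or.inl (ne_of_gt (by have : A < x := hx; show (0:ℝ) < y + x; linarith))))
    · exact continuousOn_id.rpow_const (fun x hx => Or.inl (ne_of_gt (hA.trans hx.out)))
  · filter_upwards [ae_restrict_mem measurableSet_Ioi] with z hz
    have hz0 : 0 < z := hA.trans hz
    have h1 : (y + z) ^ (-δ) ≤ y ^ (-δ) :=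
      Real.rpow_le_rpow_of_nonpos hy (by linarith) (by linarith)
    have h2 : (0:ℝ) ≤ (y + z) ^ (-δ) := by positivity
    rw [Real.norm_eq_abs, abs_of_nonneg (mul_nonneg (by linarith) (by positivity))]
    apply mul_le_mul_of_nonneg_right _ (by positivity)
    linarith

end helpers

section ibp
variable {y δ α A : ℝ}

lemma ibp_tail (hy : 0 < y) (hα0 : 0 < α) (hα1 : α < 1) (hδ : 0 < δ) (hA : 0 < A) :
    ∫ z in Ioi A, (y ^ (-δ) - (y + z) ^ (-δ)) * z ^ (-1 - α)
      = (y ^ (-δ) - (y + A) ^ (-δ)) * A ^ (-α) / α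
        + (δ / α) * ∫ z in Ioi A, z ^ (-α) * (y + z) ^ (-δ - 1) := by
  set Φ : ℝ → ℝ := fun z => -((y ^ (-δ) - (y + z) ^ (-δ)) * z ^ (-α)) / α with hΦ
  set F : ℝ → ℝ := fun z => (y ^ (-δ) - (y + z) ^ (-δ)) * z ^ (-1 - α)
      - (δ / α) * (z ^ (-α) * (y + z) ^ (-δ - 1)) with hF
  have hD : ∀ z ∈ Ici A, HasDerivAt Φ (F z) z := by
    intro z hz
    have hz0 : 0 < z := lt_of_lt_of_le hA hz
    have hyz : (0:ℝ) < y + z := by linarith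
    have h1 : HasDerivAt (fun z : ℝ => (y + z) ^ (-δ)) (1 * (-δ) * (y + z) ^ (-δ - 1)) z :=
      ((hasDerivAt_id z).const_add y).rpow_const (Or.inl (ne_of_gt hyz))
    have h2 : HasDerivAt (fun z : ℝ => z ^ (-α)) (1 * (-α) * z ^ (-α - 1)) z :=
      (hasDerivAt_id z).rpow_const (Or.inl (ne_of_gt hz0))
    have h3 := (((hasDerivAt_const z (y ^ (-δ))).sub h1).mul h2).neg.div_const α
    refine HasDerivAt.congr_deriv h3 ?_
    have e1 : z ^ (-α - 1) = z ^ (-1 - α) := by ring_nf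
    have hα' : α ≠ 0 := ne_of_gt hα0
    rw [e1, hF]
    simp only
    field_simp
    simp only [Pi.sub_apply]
    ring
  have tend : Tendsto Φ atTop (𝓝 0) := by
    have t1 : Tendsto (fun z : ℝ => (y + z) ^ (-δ)) atTop (𝓝 0) :=
      (tendsto_rpow_neg_atTop hδ).comp (tendsto_atTop_add_const_left _ y tendsto_id)
    have t2 : Tendsto (fun z : ℝ => z ^ (-α)) atTop (𝓝 0) :=
      tendsto_rpow_neg_atTop hα0
    have := (((tendsto_const_nhds (x := y ^ (-δ))).sub t1).mul t2).neg.div_const α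
    simpa using this
  have hint1 := int_G1_Ioi (α := α) hy hα0 hδ hA
  have hint2 := (int_G2_Ioi (α := α) hy hα0 hδ hA).const_mul (δ / α)
  have intF : IntegrableOn F (Ioi A) := hint1.sub hint2
  have key := integral_Ioi_of_hasDerivAt_of_tendsto' hD intF tend
  rw [hF] at key
  rw [integral_sub hint1 hint2, integral_const_mul] at key
  have hΦA : Φ A = -((y ^ (-δ) - (y + A) ^ (-δ)) * A ^ (-α)) / α := rfl
  rw [hΦA] at key
  linear_combination key

end ibp

section rest
variable {y δ α A : ℝ}

lemma int_H_Ioc (hy : 0 < y) (hA : 0 < A) :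
    IntegrableOn (fun u : ℝ => (y + u) ^ (-δ - 1)) (Ioc 0 A) := by
  have : IntegrableOn (fun u : ℝ => (y + u) ^ (-δ - 1)) (Icc 0 A) := by
    apply ContinuousOn.integrableOn_compact isCompact_Icc
    exact (continuousOn_const.add continuousOn_id).rpow_const
      (fun x hx => Or.inl (ne_of_gt (by have : 0 ≤ x := hx.1; show (0:ℝ) < y + x; linarith)))
  exact this.mono_set Ioc_subset_Icc_self

lemma ftc_h (hy : 0 < y) (hδ : 0 < δ) (hA : 0 < A) :
    y ^ (-δ) - (y + A) ^ (-δ) = δ * ∫ u in Ioc (0:ℝ) A, (y + u) ^ (-δ - 1) := by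
  have key : ∫ u in (0:ℝ)..A, δ * (y + u) ^ (-δ - 1)
      = (fun u : ℝ => -(y + u) ^ (-δ)) A - (fun u : ℝ => -(y + u) ^ (-δ)) 0 := by
    apply intervalIntegral.integral_eq_sub_of_hasDerivAt
    · intro u hu
      rw [Set.uIcc_of_le hA.le] at hu
      have hyu : (0:ℝ) < y + u := by have := hu.1; positivity
      have h1 := (((hasDerivAt_id u).const_add y).rpow_const
        (p := -δ) (Or.inl (ne_of_gt hyu))).neg
      simp only [id_eq] at h1
      convert h1 using 1
      · rfl
      · ring
    · apply ContinuousOn.intervalIntegrable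
      apply continuousOn_const.mul
      apply (continuousOn_const.add continuousOn_id).rpow_const
      intro x hx
      rw [Set.uIcc_of_le hA.le] at hx
      exact Or.inl (ne_of_gt (by have : 0 ≤ x := hx.1; show (0:ℝ) < y + x; linarith))
  rw [intervalIntegral.integral_of_le hA.le, MeasureTheory.integral_const_mul] at key
  simp only [add_zero] at key
  linarith [key]

lemma pow_Ioc (hα0 : 0 < α) (hα1 : α < 1) (hA : 0 < A) :
    ∫ u in Ioc (0:ℝ) A, u ^ (-α) = A ^ (1 - α) / (1 - α) := by
  rw [← intervalIntegral.integral_of_le hA.le]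
  rw [integral_rpow (Or.inl (by linarith))]
  rw [Real.zero_rpow (by intro h; rw [show -α + 1 = 1 - α by ring] at h; nlinarith)]
  rw [show -α + 1 = 1 - α by ring]
  ring

lemma err_bound (hy : 0 < y) (hα0 : 0 < α) (hα1 : α < 1) (hδ : 0 < δ) (hA : 0 < A) :
    (∫ u in Ioc (0:ℝ) A, u ^ (-α) * (y + u) ^ (-δ - 1))
      - A ^ (-α) * ∫ u in Ioc (0:ℝ) A, (y + u) ^ (-δ - 1)
      ≤ y ^ (-δ - 1) * (A ^ (1 - α) / (1 - α) - A ^ (1 - α)) := by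
  have i1 := int_G2_Ioc (y := y) (δ := δ) hy hα0 hα1 hδ hA
  have i2 := (int_H_Ioc (y := y) (δ := δ) hy hA).const_mul (A ^ (-α))
  have i3 : IntegrableOn (fun u : ℝ => (u ^ (-α) - A ^ (-α)) * y ^ (-δ - 1)) (Ioc 0 A) := by
    apply Integrable.mul_const
    apply Integrable.sub
    · exact (intervalIntegrable_iff_integrableOn_Ioc_of_le hA.le).mp
        (intervalIntegral.intervalIntegrable_rpow' (by linarith))
    · exact integrableOn_const measure_Ioc_lt_top.ne
  have step : (∫ u in Ioc (0:ℝ) A, u ^ (-α) * (y + u) ^ (-δ - 1))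
      - A ^ (-α) * ∫ u in Ioc (0:ℝ) A, (y + u) ^ (-δ - 1)
      = ∫ u in Ioc (0:ℝ) A, (u ^ (-α) - A ^ (-α)) * (y + u) ^ (-δ - 1) := by
    rw [← MeasureTheory.integral_const_mul, ← MeasureTheory.integral_sub i1 i2]
    congr 1
    ext u
    ring
  rw [step]
  have mono : ∫ u in Ioc (0:ℝ) A, (u ^ (-α) - A ^ (-α)) * (y + u) ^ (-δ - 1)
      ≤ ∫ u in Ioc (0:ℝ) A, (u ^ (-α) - A ^ (-α)) * y ^ (-δ - 1) := by
    apply setIntegral_mono_on (MeasureTheory.IntegrableOn.congr_fun (i1.sub i2)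
      (fun u hu => by simp only [Pi.sub_apply]; ring) measurableSet_Ioc) i3 measurableSet_Ioc
    intro u hu
    have hu0 : 0 < u := hu.1
    have hfac : (0:ℝ) ≤ u ^ (-α) - A ^ (-α) := by
      have := Real.rpow_le_rpow_of_nonpos hu0 hu.2 (by linarith : -α ≤ 0)
      linarith
    apply mul_le_mul_of_nonneg_left _ hfac
    exact Real.rpow_le_rpow_of_nonpos hy (by linarith) (by linarith)
  apply le_trans mono
  rw [MeasureTheory.integral_mul_const]
  rw [MeasureTheory.integral_sub (by
      exact (intervalIntegrable_iff_integrableOn_Ioc_of_le hA.le).mp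
        (intervalIntegral.intervalIntegrable_rpow' (by linarith)))
    (integrableOn_const (C := A ^ (-α)) (s := Ioc (0:ℝ) A) (μ := volume) measure_Ioc_lt_top.ne)]
  rw [pow_Ioc hα0 hα1 hA, MeasureTheory.setIntegral_const, measureReal_def, Real.volume_Ioc, smul_eq_mul,
    ENNReal.toReal_ofReal (by linarith)]
  rw [show A - 0 = A by ring]
  have hAA : A * A ^ (-α) = A ^ (1 - α) := by
    nth_rewrite 1 [← Real.rpow_one A]
    rw [← Real.rpow_add hA, show (1:ℝ) + -α = 1 - α by ring]
  rw [mul_comm (A ^ (1 - α) / (1 - α) - A * A ^ (-α)) (y ^ (-δ-1)), hAA]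

end rest

theorem stmt4 (δ a A α : ℝ) (hδ : 0 < δ) (ha : 0 < a) (hA : 0 < A)
    (hα : α ∈ Set.Ioo (0:ℝ) 1) (y : ℝ) (hy : 0 < y) :
    (Real.exp (-(y ^ (-δ))) * δ * a * (α⁻¹ * realBeta (α + δ) (1 - α)) * y ^ (-α - δ)
        - Real.exp (-(y ^ (-δ))) * δ * a * (1 - α)⁻¹ * A ^ (1 - α) * y ^ (-1 - δ))
      ≤ ∫ z in Set.Ioi A,
          (Real.exp (-((y + z) ^ (-δ))) - Real.exp (-(y ^ (-δ)))) * (a * z ^ (-1 - α)) := by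
  obtain ⟨hα0, hα1⟩ := hα
  set E := Real.exp (-(y ^ (-δ))) with hE
  have hE0 : 0 < E := Real.exp_pos _
  -- pointwise inequality and integrability, then monotonicity of the integral
  have hmono : ∀ z ∈ Ioi A,
      (E * a) * ((y ^ (-δ) - (y + z) ^ (-δ)) * z ^ (-1 - α))
        ≤ (Real.exp (-((y + z) ^ (-δ))) - E) * (a * z ^ (-1 - α)) := by
    intro z hz
    have hz0 : 0 < z := hA.trans hz
    have hyz : (0:ℝ) < y + z := by linarith
    have key : E * (y ^ (-δ) - (y + z) ^ (-δ)) ≤ Real.exp (-((y + z) ^ (-δ))) - E := by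
      have h := Real.add_one_le_exp (y ^ (-δ) - (y + z) ^ (-δ))
      have e : Real.exp (-((y + z) ^ (-δ)))
          = E * Real.exp (y ^ (-δ) - (y + z) ^ (-δ)) := by
        rw [hE, ← Real.exp_add]; ring_nf
      rw [e]
      nlinarith [hE0]
    calc (E * a) * ((y ^ (-δ) - (y + z) ^ (-δ)) * z ^ (-1 - α))
        = (E * (y ^ (-δ) - (y + z) ^ (-δ))) * (a * z ^ (-1 - α)) := by ring
      _ ≤ (Real.exp (-((y + z) ^ (-δ))) - E) * (a * z ^ (-1 - α)) :=
          mul_le_mul_of_nonneg_right key (by positivity)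
  have hint1 : IntegrableOn
      (fun z : ℝ => (E * a) * ((y ^ (-δ) - (y + z) ^ (-δ)) * z ^ (-1 - α))) (Ioi A) :=
    (int_G1_Ioi hy hα0 hδ hA).const_mul _
  have hint2 : IntegrableOn
      (fun z : ℝ => (Real.exp (-((y + z) ^ (-δ))) - E) * (a * z ^ (-1 - α))) (Ioi A) := by
    have hb : IntegrableOn (fun z : ℝ => a * z ^ (-1 - α)) (Ioi A) :=
      (integrableOn_Ioi_rpow_of_lt (by linarith) hA).const_mul _
    apply Integrable.mono' hb
    · apply ContinuousOn.aestronglyMeasurable _ measurableSet_Ioi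
      apply ContinuousOn.mul
      · apply ContinuousOn.sub _ continuousOn_const
        apply Real.continuous_exp.comp_continuousOn
        apply ContinuousOn.neg
        exact (continuousOn_const.add continuousOn_id).rpow_const
          (fun x hx => Or.inl (ne_of_gt (by have : A < x := hx; show (0:ℝ) < y + x; linarith)))
      · exact continuousOn_const.mul
          (continuousOn_id.rpow_const (fun x hx => Or.inl (ne_of_gt (hA.trans hx.out))))
    · filter_upwards [ae_restrict_mem measurableSet_Ioi] with z hz
      have hz0 : 0 < z := hA.trans hz
      have hyz : (0:ℝ) < y + z := by linarith
      have hle : (y + z) ^ (-δ) ≤ y ^ (-δ) :=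
        Real.rpow_le_rpow_of_nonpos hy (by linarith) (by linarith)
      have d0 : 0 ≤ Real.exp (-((y + z) ^ (-δ))) - E := by
        rw [hE]
        have := Real.exp_le_exp.mpr (neg_le_neg hle)
        linarith
      have d1 : Real.exp (-((y + z) ^ (-δ))) - E ≤ 1 := by
        have h1 : Real.exp (-((y + z) ^ (-δ))) ≤ 1 :=
          Real.exp_le_one_iff.mpr (by positivity |> neg_nonpos_of_nonneg)
        linarith [hE0]
      rw [Real.norm_eq_abs, abs_of_nonneg (mul_nonneg d0 (by positivity))]
      calc (Real.exp (-((y + z) ^ (-δ))) - E) * (a * z ^ (-1 - α))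
          ≤ 1 * (a * z ^ (-1 - α)) := mul_le_mul_of_nonneg_right d1 (by positivity)
        _ = a * z ^ (-1 - α) := one_mul _
  have step1 := setIntegral_mono_on hint1 hint2 measurableSet_Ioi hmono
  rw [MeasureTheory.integral_const_mul] at step1
  -- compute the lower integral
  have f1 := ibp_tail hy hα0 hα1 hδ hA
  have f2 := ftc_h (y := y) (δ := δ) (A := A) hy hδ hA
  have f3 : (∫ u in Ioc (0:ℝ) A, u ^ (-α) * (y + u) ^ (-δ - 1))
      + (∫ z in Ioi A, z ^ (-α) * (y + z) ^ (-δ - 1))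
      = y ^ (-α - δ) * realBeta (α + δ) (1 - α) := by
    rw [← beta_cov hy hα0 hα1 hδ]
    rw [← setIntegral_union (Ioc_disjoint_Ioi le_rfl) measurableSet_Ioi
      (int_G2_Ioc hy hα0 hα1 hδ hA) (int_G2_Ioi hy hα0 hδ hA),
      Set.Ioc_union_Ioi_eq_Ioi hA.le]
  have f4 := err_bound hy hα0 hα1 hδ hA
  rw [f1, f2] at step1
  set T := ∫ z in Ioi A, z ^ (-α) * (y + z) ^ (-δ - 1) with hT
  set Eioc := ∫ u in Ioc (0:ℝ) A, u ^ (-α) * (y + u) ^ (-δ - 1) with hEioc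
  set H := ∫ u in Ioc (0:ℝ) A, (y + u) ^ (-δ - 1) with hH
  set B := realBeta (α + δ) (1 - α) with hB
  have hyd : y ^ (-δ - 1) = y ^ (-1 - δ) := by ring_nf
  have hT' : T = y ^ (-α - δ) * B - Eioc := by linarith
  rw [hT'] at step1
  -- final arithmetic
  have key2 : (E * a * δ / α) * (Eioc - A ^ (-α) * H)
      ≤ E * δ * a * (1 - α)⁻¹ * A ^ (1 - α) * y ^ (-1 - δ) := by
    have hp : (0:ℝ) < E * a * δ / α := by positivity
    calc (E * a * δ / α) * (Eioc - A ^ (-α) * H)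
        ≤ (E * a * δ / α) * (y ^ (-δ - 1) * (A ^ (1 - α) / (1 - α) - A ^ (1 - α))) :=
          mul_le_mul_of_nonneg_left f4 hp.le
      _ = E * δ * a * (1 - α)⁻¹ * A ^ (1 - α) * y ^ (-1 - δ) := by
          rw [hyd]
          have h1 : α ≠ 0 := ne_of_gt hα0
          have h2 : (1:ℝ) - α ≠ 0 := by intro h; nlinarith
          field_simp
          ring
  have key1 : E * a * (δ * H * A ^ (-α) / α + δ / α * (y ^ (-α - δ) * B - Eioc))
      = E * δ * a * (α⁻¹ * B) * y ^ (-α - δ) - (E * a * δ / α) * (Eioc - A ^ (-α) * H) := by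
    field_simp
    ring
  linarith [step1, key1, key2]
end

section
/- Let δ > 0 and g(y) = exp(-y^{-δ}). Suppose ν is a measure on ℝ \ {0} with ∫_{[-1,1]} z² ν(dz) < ∞. Then there exists y_δ > 0 such that for all y > e·y_δ, ∫_{[-1,1]} [g(y e^z) - g(y) - y(e^z - 1) g'(y)] ν(dz) ≥ -9 δ(1+δ) y^{-δ} [e^{δ+2} ∫_{[-1,0]} z² ν(dz) + ∫_{[0,1]} z² ν(dz)]. -/
open MeasureTheory
open MeasureTheory

lemma taylor2 {h h' h'' : ℝ → ℝ} {z M : ℝ}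
    (hd1 : ∀ u ∈ Set.Icc (min 0 z) (max 0 z), HasDerivAt h (h' u) u)
    (hd2 : ∀ u ∈ Set.Icc (min 0 z) (max 0 z), HasDerivAt h' (h'' u) u)
    (hM : ∀ u ∈ Set.Icc (min 0 z) (max 0 z), |h'' u| ≤ M) :
    |h z - h 0 - z * h' 0| ≤ M * z ^ 2 := by
  set s := Set.Icc (min 0 z) (max 0 z) with hs
  have hconv : Convex ℝ s := convex_Icc _ _
  have h0s : (0:ℝ) ∈ s := ⟨min_le_left _ _, le_max_left _ _⟩
  have hzs : z ∈ s := ⟨min_le_right _ _, le_max_right _ _⟩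
  have habs : ∀ u ∈ s, |u| ≤ |z| := by
    intro u hu
    rcases le_or_gt 0 z with hz0 | hz0
    · rw [abs_of_nonneg hz0]
      rw [hs, min_eq_left hz0, max_eq_right hz0] at hu
      exact abs_le.2 ⟨by linarith [hu.1], hu.2⟩
    · rw [abs_of_neg hz0]
      rw [hs, min_eq_right hz0.le, max_eq_left hz0.le] at hu
      exact abs_le.2 ⟨by linarith [hu.1], by linarith [hu.2]⟩
  -- step 1: |h' u - h' 0| ≤ M * |u|
  have step1 : ∀ u ∈ s, |h' u - h' 0| ≤ M * |z| := by
    intro u hu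
    have := hconv.norm_image_sub_le_of_norm_hasDerivWithin_le
      (fun x hx => (hd2 x hx).hasDerivWithinAt) (fun x hx => hM x hx) h0s hu
    simp only [Real.norm_eq_abs, sub_zero] at this
    have hM0 : 0 ≤ M := le_trans (abs_nonneg _) (hM 0 h0s)
    calc |h' u - h' 0| ≤ M * |u| := this
      _ ≤ M * |z| := by exact mul_le_mul_of_nonneg_left (habs u hu) hM0
  -- step 2
  have step2 : ∀ u ∈ s, HasDerivWithinAt (fun u => h u - h 0 - u * h' 0) (h' u - h' 0) s u := by
    intro u hu
    have : HasDerivAt (fun u => h u - h 0 - u * h' 0) (h' u - 1 * h' 0) u :=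
      ((hd1 u hu).sub_const (h 0)).sub ((hasDerivAt_id u).mul_const (h' 0))
    simpa using this.hasDerivWithinAt
  have := hconv.norm_image_sub_le_of_norm_hasDerivWithin_le step2
    (fun x hx => by simpa using step1 x hx) h0s hzs
  simp only [Real.norm_eq_abs, sub_zero, zero_mul, sub_self] at this
  calc |h z - h 0 - z * h' 0| ≤ M * |z| * |z| := by simpa using this
    _ = M * z ^ 2 := by rw [mul_assoc, ← abs_mul, ← sq, abs_sq]

lemma hderiv1 (δ A : ℝ) (u : ℝ) :
    HasDerivAt (fun u : ℝ => Real.exp (-(A * Real.exp (-δ * u))))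
      (δ * (A * Real.exp (-δ * u)) * Real.exp (-(A * Real.exp (-δ * u)))) u := by
  have ht : HasDerivAt (fun u : ℝ => A * Real.exp (-δ * u))
      (A * (Real.exp (-δ * u) * (-δ))) u := by
    have : HasDerivAt (fun u : ℝ => (-δ) * u) (-δ) u := by
      simpa using (hasDerivAt_id u).const_mul (-δ)
    exact (this.exp).const_mul A
  have := (ht.fun_neg).exp
  convert this using 1
  ring

lemma hderiv2 (δ A : ℝ) (u : ℝ) :
    HasDerivAt (fun u : ℝ => δ * (A * Real.exp (-δ * u)) * Real.exp (-(A * Real.exp (-δ * u))))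
      (δ ^ 2 * (A * Real.exp (-δ * u)) * ((A * Real.exp (-δ * u)) - 1)
        * Real.exp (-(A * Real.exp (-δ * u)))) u := by
  have ht : HasDerivAt (fun u : ℝ => A * Real.exp (-δ * u))
      (A * (Real.exp (-δ * u) * (-δ))) u := by
    have : HasDerivAt (fun u : ℝ => (-δ) * u) (-δ) u := by
      simpa using (hasDerivAt_id u).const_mul (-δ)
    exact (this.exp).const_mul A
  have h1 : HasDerivAt (fun u : ℝ => δ * (A * Real.exp (-δ * u)))
      (δ * (A * (Real.exp (-δ * u) * (-δ)))) u := ht.const_mul δ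
  have h2 := (ht.fun_neg).exp
  have := h1.fun_mul h2
  refine this.congr_deriv ?_
  ring

lemma gderiv (δ : ℝ) (y : ℝ) (hy : 0 < y) :
    deriv (fun x : ℝ => Real.exp (-(x ^ (-δ)))) y
      = Real.exp (-(y ^ (-δ))) * (δ * y ^ (-δ - 1)) := by
  have h1 : HasDerivAt (fun x : ℝ => x ^ (-δ)) (-δ * y ^ (-δ - 1)) y :=
    Real.hasDerivAt_rpow_const (Or.inl hy.ne')
  have h2 := (h1.fun_neg).exp
  rw [h2.deriv]
  ring

lemma rpow_mul_exp (δ y z : ℝ) (hy : 0 < y) :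
    (y * Real.exp z) ^ (-δ) = y ^ (-δ) * Real.exp (-δ * z) := by
  rw [Real.mul_rpow hy.le (Real.exp_pos z).le,
    Real.rpow_def_of_pos (Real.exp_pos z), Real.log_exp]
  ring_nf

lemma key (δ A : ℝ) (hδ : 0 < δ) (hA : 0 < A) (hA1 : A * Real.exp δ ≤ 1)
    (z : ℝ) (hz : z ∈ Set.Icc (-1:ℝ) 1) (B : ℝ)
    (hB : ∀ u ∈ Set.Icc (min 0 z) (max 0 z), A * Real.exp (-δ * u) ≤ B) :
    |Real.exp (-(A * Real.exp (-δ * z))) - Real.exp (-A) - z * (δ * A * Real.exp (-A))|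
      ≤ δ ^ 2 * B * z ^ 2 := by
  have hsub : Set.Icc (min 0 z) (max 0 z) ⊆ Set.Icc (-1:ℝ) 1 := by
    apply Set.Icc_subset_Icc
    · exact le_min (by norm_num) hz.1
    · exact max_le (by norm_num) hz.2
  have hbd : ∀ u ∈ Set.Icc (min 0 z) (max 0 z),
      |δ ^ 2 * (A * Real.exp (-δ * u)) * ((A * Real.exp (-δ * u)) - 1)
        * Real.exp (-(A * Real.exp (-δ * u)))| ≤ δ ^ 2 * B := by
    intro u hu
    set t := A * Real.exp (-δ * u) with htdef
    have ht0 : 0 < t := mul_pos hA (Real.exp_pos _)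
    have ht1 : t ≤ 1 := by
      have hu1 : -(1:ℝ) ≤ u := (hsub hu).1
      have he : Real.exp (-δ * u) ≤ Real.exp δ := by
        apply Real.exp_le_exp.2; nlinarith
      calc t ≤ A * Real.exp δ := mul_le_mul_of_nonneg_left he hA.le
        _ ≤ 1 := hA1
    have htB : t ≤ B := hB u hu
    have het : Real.exp (-t) ≤ 1 := Real.exp_le_one_iff.2 (by linarith)
    have het0 : 0 < Real.exp (-t) := Real.exp_pos _
    have hb1 : 0 ≤ δ ^ 2 * t * (1 - t) :=
      mul_nonneg (mul_nonneg (sq_nonneg δ) ht0.le) (by linarith)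
    have hb2 : δ ^ 2 * t * (1 - t) * Real.exp (-t) ≤ δ ^ 2 * t * (1 - t) * 1 :=
      mul_le_mul_of_nonneg_left het hb1
    have hb3 : 0 ≤ δ ^ 2 * (B - t) := mul_nonneg (sq_nonneg δ) (by linarith)
    have hb4 : 0 ≤ δ ^ 2 * t * t := mul_nonneg (mul_nonneg (sq_nonneg δ) ht0.le) ht0.le
    rw [abs_of_nonpos (mul_nonpos_of_nonpos_of_nonneg
      (by nlinarith [sq_nonneg δ]) het0.le)]
    nlinarith
  have := taylor2 (hd1 := fun u _ => hderiv1 δ A u) (hd2 := fun u _ => hderiv2 δ A u) hbd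
  simpa using this

lemma expquad (z : ℝ) (hz : z ∈ Set.Icc (-1:ℝ) 1) :
    |Real.exp z - 1 - z| ≤ Real.exp 1 * z ^ 2 := by
  have := taylor2 (h := Real.exp) (h' := Real.exp) (h'' := Real.exp) (z := z)
    (fun u _ => Real.hasDerivAt_exp u) (fun u _ => Real.hasDerivAt_exp u)
    (fun u hu => by
      rw [abs_of_pos (Real.exp_pos u)]
      exact Real.exp_le_exp.2 (le_trans hu.2 (max_le (by norm_num) hz.2)))
  simpa using this

lemma Gabs (δ A : ℝ) (hδ : 0 < δ) (hA : 0 < A) (hA1 : A * Real.exp δ ≤ 1)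
    (z : ℝ) (hz : z ∈ Set.Icc (-1:ℝ) 1) (B : ℝ)
    (hB : ∀ u ∈ Set.Icc (min 0 z) (max 0 z), A * Real.exp (-δ * u) ≤ B) :
    |Real.exp (-(A * Real.exp (-δ * z))) - Real.exp (-A)
        - (Real.exp z - 1) * (δ * A * Real.exp (-A))|
      ≤ (δ ^ 2 * B + Real.exp 1 * δ * A) * z ^ 2 := by
  have h1 := key δ A hδ hA hA1 z hz B hB
  have h2 := expquad z hz
  have hc0 : 0 < δ * A * Real.exp (-A) := by positivity
  have hc1 : δ * A * Real.exp (-A) ≤ δ * A := by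
    have := mul_le_mul_of_nonneg_left (Real.exp_le_one_iff.2 (show -A ≤ 0 by linarith))
      (show (0:ℝ) ≤ δ * A by positivity)
    linarith
  have heq : Real.exp (-(A * Real.exp (-δ * z))) - Real.exp (-A)
        - (Real.exp z - 1) * (δ * A * Real.exp (-A))
      = (Real.exp (-(A * Real.exp (-δ * z))) - Real.exp (-A) - z * (δ * A * Real.exp (-A)))
        - (Real.exp z - 1 - z) * (δ * A * Real.exp (-A)) := by ring
  rw [heq]
  have h3 : |(Real.exp z - 1 - z) * (δ * A * Real.exp (-A))|
      ≤ (Real.exp 1 * z ^ 2) * (δ * A) := by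
    rw [abs_mul, abs_of_pos hc0]
    exact mul_le_mul h2 hc1 hc0.le (by positivity)
  calc |_ - _| ≤ |Real.exp (-(A * Real.exp (-δ * z))) - Real.exp (-A)
          - z * (δ * A * Real.exp (-A))| + |(Real.exp z - 1 - z) * (δ * A * Real.exp (-A))| :=
        abs_sub _ _
    _ ≤ δ ^ 2 * B * z ^ 2 + (Real.exp 1 * z ^ 2) * (δ * A) := add_le_add h1 h3
    _ = (δ ^ 2 * B + Real.exp 1 * δ * A) * z ^ 2 := by ring

set_option maxHeartbeats 2000000 in
theorem stmt5 (δ : ℝ) (hδ : 0 < δ) (ν : Measure ℝ)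
    (hν : IntegrableOn (fun z : ℝ => z ^ 2) (Set.Icc (-1:ℝ) 1) ν) :
    ∃ yδ > (0:ℝ), ∀ y : ℝ, Real.exp 1 * yδ < y →
      -(9 * δ * (1 + δ) * y ^ (-δ)
          * (Real.exp (δ + 2) * ∫ z in Set.Icc (-1:ℝ) 0, z ^ 2 ∂ν
              + ∫ z in Set.Icc (0:ℝ) 1, z ^ 2 ∂ν))
        ≤ ∫ z in Set.Icc (-1:ℝ) 1,
            (Real.exp (-((y * Real.exp z) ^ (-δ))) - Real.exp (-(y ^ (-δ)))
              - y * (Real.exp z - 1)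
                  * deriv (fun x : ℝ => Real.exp (-(x ^ (-δ)))) y) ∂ν := by
  refine ⟨1, one_pos, fun y hy => ?_⟩
  rw [mul_one] at hy
  have hy0 : 0 < y := lt_trans (Real.exp_pos 1) hy
  set A : ℝ := y ^ (-δ) with hAdef
  have hA : 0 < A := Real.rpow_pos_of_pos hy0 _
  have hA1 : A * Real.exp δ ≤ 1 := by
    have h1 : y ^ (-δ) ≤ (Real.exp 1) ^ (-δ) :=
      Real.rpow_le_rpow_of_nonpos (Real.exp_pos 1) hy.le (by linarith)
    have h2 : (Real.exp 1) ^ (-δ) = Real.exp (-δ) := Real.exp_one_rpow (-δ)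
    calc A * Real.exp δ ≤ Real.exp (-δ) * Real.exp δ := by
          rw [← h2]; exact mul_le_mul_of_nonneg_right h1 (Real.exp_pos δ).le
      _ = 1 := by rw [← Real.exp_add]; simp
  set G : ℝ → ℝ := fun z => Real.exp (-(A * Real.exp (-δ * z))) - Real.exp (-A)
      - (Real.exp z - 1) * (δ * A * Real.exp (-A)) with hGdef
  -- rewrite the integrand
  have hGeq : (fun z : ℝ => Real.exp (-((y * Real.exp z) ^ (-δ))) - Real.exp (-(y ^ (-δ)))
      - y * (Real.exp z - 1) * deriv (fun x : ℝ => Real.exp (-(x ^ (-δ)))) y) = G := by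
    funext z
    rw [hGdef]
    simp only
    rw [gderiv δ y hy0, rpow_mul_exp δ y z hy0, ← hAdef]
    have hyA : y * y ^ (-δ - 1) = A := by
      rw [hAdef, show -δ - 1 = -δ + (-1) by ring, Real.rpow_add hy0, Real.rpow_neg_one]
      field_simp
    have : y * (Real.exp z - 1) * (Real.exp (-A) * (δ * y ^ (-δ - 1)))
        = (Real.exp z - 1) * (δ * A * Real.exp (-A)) := by
      rw [← hyA]; ring
    rw [this]
  rw [hGeq]
  -- continuity and integrability of G
  have hGcont : Continuous G := by
    rw [hGdef]; fun_prop
  have hBall : ∀ z ∈ Set.Icc (-1:ℝ) 1, ∀ u ∈ Set.Icc (min 0 z) (max 0 z),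
      A * Real.exp (-δ * u) ≤ A * Real.exp δ := by
    intro z hz u hu
    have hu1 : -1 ≤ u := le_trans (le_min (by norm_num) hz.1) hu.1
    exact mul_le_mul_of_nonneg_left (Real.exp_le_exp.2 (by nlinarith)) hA.le
  set C : ℝ := δ ^ 2 * (A * Real.exp δ) + Real.exp 1 * δ * A with hCdef
  have hGabs : ∀ z ∈ Set.Icc (-1:ℝ) 1, |G z| ≤ C * z ^ 2 := fun z hz =>
    Gabs δ A hδ hA hA1 z hz (A * Real.exp δ) (hBall z hz)
  have hGint : IntegrableOn G (Set.Icc (-1:ℝ) 1) ν := by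
    apply Integrable.mono' (hν.const_mul C) hGcont.aestronglyMeasurable
    filter_upwards [self_mem_ae_restrict measurableSet_Icc] with z hz
    rw [Real.norm_eq_abs]
    exact hGabs z hz
  -- split the integral
  have hsub1 : Set.Icc (-1:ℝ) 0 ⊆ Set.Icc (-1:ℝ) 1 := Set.Icc_subset_Icc_right (by norm_num)
  have hsub2 : Set.Ioc (0:ℝ) 1 ⊆ Set.Icc (-1:ℝ) 1 := fun x hx => ⟨by linarith [hx.1], hx.2⟩
  have hsub3 : Set.Icc (0:ℝ) 1 ⊆ Set.Icc (-1:ℝ) 1 := Set.Icc_subset_Icc_left (by norm_num)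
  have hdisj : Disjoint (Set.Icc (-1:ℝ) 0) (Set.Ioc (0:ℝ) 1) := by
    apply Set.disjoint_left.2
    intro x hx hx'
    have := hx.2; have := hx'.1; linarith
  have hsplit : (∫ z in Set.Icc (-1:ℝ) 1, G z ∂ν)
      = (∫ z in Set.Icc (-1:ℝ) 0, G z ∂ν) + ∫ z in Set.Ioc (0:ℝ) 1, G z ∂ν := by
    rw [← Set.Icc_union_Ioc_eq_Icc (show (-1:ℝ) ≤ 0 by norm_num) (show (0:ℝ) ≤ 1 by norm_num)]
    exact setIntegral_union hdisj measurableSet_Ioc (hGint.mono_set hsub1)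
      (hGint.mono_set hsub2)
  -- constants
  set C1 : ℝ := 9 * δ * (1 + δ) * Real.exp (δ + 2) * A with hC1def
  set C2 : ℝ := 9 * δ * (1 + δ) * A with hC2def
  have he1l : (2.7182818283:ℝ) < Real.exp 1 := Real.exp_one_gt_d9
  have he1u : Real.exp 1 < 2.7182818286 := Real.exp_one_lt_d9
  have heδ : 1 + δ ≤ Real.exp δ := by linarith [Real.add_one_le_exp δ]
  have hE1 : (1:ℝ) ≤ Real.exp δ := by linarith
  have he2 : (7:ℝ) ≤ Real.exp 1 * Real.exp 1 := by nlinarith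
  -- C ≤ C1
  have hCC1 : C ≤ C1 := by
    have hsc : δ ^ 2 * Real.exp δ + Real.exp 1 * δ
        ≤ 9 * δ * (1 + δ) * Real.exp (δ + 2) := by
      rw [show δ + 2 = δ + (1 + 1) by ring, Real.exp_add, Real.exp_add]
      nlinarith [mul_nonneg (mul_nonneg hδ.le hδ.le) (Real.exp_pos δ).le,
        mul_nonneg hδ.le (Real.exp_pos δ).le, sq_nonneg δ]
    have := mul_le_mul_of_nonneg_right hsc hA.le
    rw [hCdef, hC1def]; nlinarith
  -- pointwise lower bounds
  have hlb1 : ∀ z ∈ Set.Icc (-1:ℝ) 0, -C1 * z ^ 2 ≤ G z := by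
    intro z hz
    have hz' : z ∈ Set.Icc (-1:ℝ) 1 := ⟨hz.1, by linarith [hz.2]⟩
    have h := hGabs z hz'
    have h2 := neg_abs_le (G z)
    nlinarith [mul_le_mul_of_nonneg_right hCC1 (sq_nonneg z)]
  have hlb2 : ∀ z ∈ Set.Ioc (0:ℝ) 1, -C2 * z ^ 2 ≤ G z := by
    intro z hz
    have hz' : z ∈ Set.Icc (-1:ℝ) 1 := hsub2 hz
    have hB : ∀ u ∈ Set.Icc (min 0 z) (max 0 z), A * Real.exp (-δ * u) ≤ A := by
      intro u hu
      have hu0 : 0 ≤ u := le_trans (le_min le_rfl hz.1.le) hu.1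
      have he : Real.exp (-δ * u) ≤ 1 := Real.exp_le_one_iff.2 (by nlinarith)
      nlinarith
    have h := Gabs δ A hδ hA hA1 z hz' A hB
    have h2 := neg_abs_le (G z)
    have hsc : δ ^ 2 * A + Real.exp 1 * δ * A ≤ C2 := by
      rw [hC2def]
      nlinarith [mul_nonneg hδ.le hA.le, mul_nonneg (mul_nonneg hδ.le hδ.le) hA.le]
    nlinarith [mul_le_mul_of_nonneg_right hsc (sq_nonneg z)]
  -- integral bounds
  have hib1 : -C1 * ∫ z in Set.Icc (-1:ℝ) 0, z ^ 2 ∂ν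
      ≤ ∫ z in Set.Icc (-1:ℝ) 0, G z ∂ν := by
    rw [← MeasureTheory.integral_const_mul]
    exact setIntegral_mono_on ((hν.mono_set hsub1).const_mul _) (hGint.mono_set hsub1)
      measurableSet_Icc hlb1
  have hib2 : -C2 * ∫ z in Set.Ioc (0:ℝ) 1, z ^ 2 ∂ν
      ≤ ∫ z in Set.Ioc (0:ℝ) 1, G z ∂ν := by
    rw [← MeasureTheory.integral_const_mul]
    exact setIntegral_mono_on ((hν.mono_set hsub2).const_mul _) (hGint.mono_set hsub2)
      measurableSet_Ioc hlb2
  have hmono : (∫ z in Set.Ioc (0:ℝ) 1, z ^ 2 ∂ν) ≤ ∫ z in Set.Icc (0:ℝ) 1, z ^ 2 ∂ν := by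
    apply setIntegral_mono_set (hν.mono_set hsub3)
    · exact Filter.Eventually.of_forall (fun z => sq_nonneg z)
    · exact HasSubset.Subset.eventuallyLE Set.Ioc_subset_Icc_self
  have hC2nn : 0 ≤ C2 := by rw [hC2def]; positivity
  rw [hsplit]
  have hring : -(9 * δ * (1 + δ) * A
        * (Real.exp (δ + 2) * ∫ z in Set.Icc (-1:ℝ) 0, z ^ 2 ∂ν
            + ∫ z in Set.Icc (0:ℝ) 1, z ^ 2 ∂ν))
      = -C1 * (∫ z in Set.Icc (-1:ℝ) 0, z ^ 2 ∂ν)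
        + -C2 * ∫ z in Set.Icc (0:ℝ) 1, z ^ 2 ∂ν := by
    rw [hC1def, hC2def]; ring
  rw [hring]
  have h3 : -C2 * (∫ z in Set.Icc (0:ℝ) 1, z ^ 2 ∂ν)
      ≤ -C2 * ∫ z in Set.Ioc (0:ℝ) 1, z ^ 2 ∂ν := by nlinarith
  linarith
end

section
/- Fix n ≥ 9, A > 1 and let g_n(y) = ln(ln(n² y)). For all y ≥ 1/n: ∫_A^∞ [g_n(y+z) - g_n(y)] z^{-2} dz ≤ y^{-1} (ln(n² y))^{-1} [1 + ln(1 + y/A)]. -/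
open MeasureTheory Filter Set

theorem stmt10 (n : ℕ) (hn : 9 ≤ n) (A : ℝ) (hA : 1 < A) :
    ∀ y : ℝ, 1 / (n : ℝ) ≤ y →
      ∫ z in Set.Ioi A,
          (Real.log (Real.log ((n : ℝ) ^ 2 * (y + z)))
            - Real.log (Real.log ((n : ℝ) ^ 2 * y))) * z ^ (-2 : ℝ)
        ≤ y⁻¹ * (Real.log ((n : ℝ) ^ 2 * y))⁻¹ * (1 + Real.log (1 + y / A)) := by
  intro y hy
  have hn9 : (9:ℝ) ≤ (n:ℝ) := by exact_mod_cast hn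
  have hn0 : (0:ℝ) < (n:ℝ) := by linarith
  have hy0 : 0 < y := lt_of_lt_of_le (by positivity) hy
  set c : ℝ := (n:ℝ)^2 with hc
  have hc0 : 0 < c := by positivity
  have hcy9 : (9:ℝ) ≤ c * y := by
    have h1 : c * (1/(n:ℝ)) ≤ c * y := mul_le_mul_of_nonneg_left hy hc0.le
    have h2 : c * (1/(n:ℝ)) = (n:ℝ) := by field_simp [hc]; ring
    linarith
  set L : ℝ := Real.log (c * y) with hL
  have hL0 : 0 < L := Real.log_pos (by linarith)
  have hA0 : 0 < A := by linarith
  -- the dominating function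
  set G : ℝ → ℝ := fun z => (Real.log (y + z) - Real.log y) / z ^ 2 with hG
  set F : ℝ → ℝ := fun z =>
    -((Real.log (y + z) - Real.log y) / z) + y⁻¹ * (Real.log z - Real.log (y + z)) with hF
  have hderiv : ∀ z ∈ Ici A, HasDerivAt F (G z) z := by
    intro z hz
    have hzA : A ≤ z := hz
    have hz0 : 0 < z := by linarith
    have hyz0 : 0 < y + z := by linarith
    have hlog1 : HasDerivAt (fun z : ℝ => Real.log (y + z)) (y + z)⁻¹ z := by
      have := (Real.hasDerivAt_log hyz0.ne').comp z ((hasDerivAt_id z).const_add y)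
      simpa [Function.comp_def] using this
    have hN : HasDerivAt (fun z : ℝ => Real.log (y + z) - Real.log y) (y + z)⁻¹ z :=
      hlog1.sub_const _
    have h1 : HasDerivAt (fun z : ℝ => (Real.log (y + z) - Real.log y) / z)
        (((y + z)⁻¹ * z - (Real.log (y + z) - Real.log y) * 1) / z ^ 2) z :=
      hN.div (hasDerivAt_id z) hz0.ne'
    have h2 : HasDerivAt (fun z : ℝ => y⁻¹ * (Real.log z - Real.log (y + z)))
        (y⁻¹ * (z⁻¹ - (y + z)⁻¹)) z :=
      ((Real.hasDerivAt_log hz0.ne').sub hlog1).const_mul _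
    have := (h1.neg).add h2
    convert this using 1
    · rfl
    · rfl
    · rfl
    · simp only [hG]
      field_simp
      ring
  have hGpos : ∀ z ∈ Ioi A, 0 ≤ G z := by
    intro z hz
    have hz0 : (0:ℝ) < z := by have := hz.out; linarith
    have : Real.log y ≤ Real.log (y + z) := Real.log_le_log hy0 (by linarith)
    have hz2 : (0:ℝ) < z ^ 2 := by positivity
    exact div_nonneg (by linarith) hz2.le
  have hFtend : Tendsto F atTop (nhds 0) := by
    have t1 : Tendsto (fun z : ℝ => Real.log (y + z) / z) atTop (nhds 0) := by
      have base : Tendsto (fun x : ℝ => Real.log x ^ 1 / (1 * x + -y)) atTop (nhds 0) :=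
        Real.tendsto_pow_log_div_mul_add_atTop 1 (-y) 1 one_ne_zero
      have comp := base.comp (tendsto_atTop_add_const_left atTop y tendsto_id)
      refine comp.congr fun z => ?_
      simp [Function.comp]
    have t1' : Tendsto (fun z : ℝ => Real.log y / z) atTop (nhds 0) :=
      tendsto_const_nhds.div_atTop tendsto_id
    have t2 : Tendsto (fun z : ℝ => y⁻¹ * (Real.log z - Real.log (y + z))) atTop (nhds 0) := by
      have h3 : Tendsto (fun z : ℝ => 1 + y / z) atTop (nhds 1) := by
        have : Tendsto (fun z : ℝ => y / z) atTop (nhds 0) :=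
          tendsto_const_nhds.div_atTop tendsto_id
        simpa using tendsto_const_nhds.add this
      have h4 : Tendsto (fun z : ℝ => -Real.log (1 + y / z)) atTop (nhds 0) := by
        have := (Real.continuousAt_log (by norm_num : (1:ℝ) ≠ 0)).tendsto.comp h3
        simpa using this.neg
      have heq : ∀ᶠ z : ℝ in atTop, -Real.log (1 + y / z) = Real.log z - Real.log (y + z) := by
        filter_upwards [eventually_gt_atTop 0] with z hz0
        have hyz0 : 0 < y + z := by linarith
        rw [show 1 + y / z = (y + z) / z by field_simp; ring,
          Real.log_div hyz0.ne' hz0.ne']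
        ring
      have := h4.congr' heq
      have := this.const_mul y⁻¹
      simpa using this
    have : Tendsto (fun z => -(Real.log (y + z) / z - Real.log y / z)
        + y⁻¹ * (Real.log z - Real.log (y + z))) atTop (nhds (-(0 - 0) + 0)) :=
      ((t1.sub t1').neg).add t2
    simp only [neg_zero, sub_zero, add_zero, neg_sub, zero_sub] at this
    refine this.congr fun z => ?_
    simp only [hF]
    ring
  have hGint : IntegrableOn G (Ioi A) :=
    integrableOn_Ioi_deriv_of_nonneg' hderiv hGpos hFtend
  have hGval : ∫ z in Ioi A, G z = 0 - F A :=
    integral_Ioi_of_hasDerivAt_of_nonneg' hderiv hGpos hFtend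
  -- pointwise bound
  set f : ℝ → ℝ := fun z =>
    (Real.log (Real.log (c * (y + z))) - Real.log (Real.log (c * y))) * z ^ (-2:ℝ) with hf
  have key : ∀ z ∈ Ioi A, 0 ≤ f z ∧ f z ≤ L⁻¹ * G z := by
    intro z hz
    have hz1 : 1 < z := lt_trans hA hz.out
    have hz0 : (0:ℝ) < z := by linarith
    have hyz0 : 0 < y + z := by linarith
    have hXY : L ≤ Real.log (c * (y + z)) := by
      apply Real.log_le_log (by positivity)
      nlinarith
    have hX0 : 0 < Real.log (c * (y + z)) := lt_of_lt_of_le hL0 hXY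
    have hrpow : z ^ (-2:ℝ) = (z ^ 2)⁻¹ := by
      rw [show (-2:ℝ) = -((2:ℕ):ℝ) by norm_num, Real.rpow_neg hz0.le, Real.rpow_natCast]
    have hrpow0 : (0:ℝ) ≤ z ^ (-2:ℝ) := by rw [hrpow]; positivity
    constructor
    · apply mul_nonneg _ hrpow0
      have := Real.log_le_log hL0 hXY
      linarith
    · have hlog2 : Real.log (Real.log (c * (y + z))) - Real.log L ≤
          (Real.log (c * (y + z)) - L) / L := by
        have h5 : Real.log (Real.log (c * (y + z)) / L) ≤ Real.log (c * (y + z)) / L - 1 :=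
          Real.log_le_sub_one_of_pos (by positivity)
        rw [Real.log_div hX0.ne' hL0.ne'] at h5
        have h6 : Real.log (c * (y + z)) / L - 1 = (Real.log (c * (y + z)) - L) / L := by
          field_simp
        linarith
      have hdiff : Real.log (c * (y + z)) - L = Real.log (y + z) - Real.log y := by
        rw [hL, Real.log_mul hc0.ne' hyz0.ne', Real.log_mul hc0.ne' hy0.ne']
        ring
      simp only [hf, hG]
      rw [hrpow]
      rw [hL] at hlog2
      calc (Real.log (Real.log (c * (y + z))) - Real.log (Real.log (c * y))) * (z ^ 2)⁻¹
          ≤ ((Real.log (c * (y + z)) - L) / L) * (z ^ 2)⁻¹ := by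
            apply mul_le_mul_of_nonneg_right _ (by positivity)
            exact hlog2
        _ = L⁻¹ * ((Real.log (y + z) - Real.log y) / z ^ 2) := by rw [hdiff]; ring
  -- integrability of f
  have hfmeas : AEStronglyMeasurable f (volume.restrict (Ioi A)) := by
    simp only [hf]
    apply Measurable.aestronglyMeasurable
    apply Measurable.mul
    · exact (Real.measurable_log.comp (Real.measurable_log.comp
        ((measurable_id.const_add y).const_mul c))).sub measurable_const
    · fun_prop
  have hbound : Integrable (fun z => L⁻¹ * G z) (volume.restrict (Ioi A)) :=
    hGint.const_mul _
  have hfint : IntegrableOn f (Ioi A) := by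
    apply Integrable.mono hbound hfmeas
    filter_upwards [ae_restrict_mem measurableSet_Ioi] with z hz
    obtain ⟨h0, h1⟩ := key z hz
    rw [Real.norm_eq_abs, Real.norm_eq_abs, abs_of_nonneg h0, abs_of_nonneg
      (le_trans h0 h1)]
    exact h1
  have hle : ∫ z in Ioi A, f z ≤ ∫ z in Ioi A, L⁻¹ * G z := by
    apply setIntegral_mono_on hfint hbound measurableSet_Ioi
    intro z hz
    exact (key z hz).2
  have hval : ∫ z in Ioi A, L⁻¹ * G z = L⁻¹ * (0 - F A) := by
    rw [integral_const_mul, hGval]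
  -- final arithmetic
  have hyA0 : 0 < y + A := by linarith
  have hFA : 0 - F A = (Real.log (y + A) - Real.log y) / A
      + y⁻¹ * (Real.log (y + A) - Real.log A) := by
    simp only [hF]
    ring
  have hlog1yA : Real.log (1 + y / A) = Real.log (y + A) - Real.log A := by
    rw [show 1 + y / A = (y + A) / A by field_simp; ring, Real.log_div hyA0.ne' hA0.ne']
  have hsmall : (Real.log (y + A) - Real.log y) / A ≤ y⁻¹ := by
    have : Real.log ((y + A) / y) ≤ (y + A) / y - 1 :=
      Real.log_le_sub_one_of_pos (by positivity)
    rw [Real.log_div hyA0.ne' hy0.ne'] at this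
    have h6 : (y + A) / y - 1 = A / y := by field_simp; ring
    rw [h6] at this
    rw [div_le_iff₀ hA0]
    calc Real.log (y + A) - Real.log y ≤ A / y := this
      _ = y⁻¹ * A := by ring
  have hfinal : L⁻¹ * (0 - F A) ≤ y⁻¹ * L⁻¹ * (1 + Real.log (1 + y / A)) := by
    rw [hFA, hlog1yA]
    have : (Real.log (y + A) - Real.log y) / A + y⁻¹ * (Real.log (y + A) - Real.log A)
        ≤ y⁻¹ * (1 + (Real.log (y + A) - Real.log A)) := by nlinarith [hsmall]
    calc L⁻¹ * ((Real.log (y + A) - Real.log y) / A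
          + y⁻¹ * (Real.log (y + A) - Real.log A))
        ≤ L⁻¹ * (y⁻¹ * (1 + (Real.log (y + A) - Real.log A))) := by
          apply mul_le_mul_of_nonneg_left this (by positivity)
      _ = y⁻¹ * L⁻¹ * (1 + (Real.log (y + A) - Real.log A)) := by ring
  calc ∫ z in Ioi A, f z ≤ ∫ z in Ioi A, L⁻¹ * G z := hle
    _ = L⁻¹ * (0 - F A) := hval
    _ ≤ y⁻¹ * L⁻¹ * (1 + Real.log (1 + y / A)) := hfinal
end

section
/- Fix n ≥ 9, A > 1, ā > 0 and α ∈ (0,1), and let g_n(y) = ln(ln(n² y)). Then for all y ≥ 1/n: ∫_A^∞ [g_n(y+z) - g_n(y)] z^{-1-α} dz ≤ (ln(n² y))^{-1} c_{α,0} y^{-α}, where c_{α,0} = π/(α sin(απ)). -/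
open MeasureTheory Set Real Filter Topology

lemma beta01 {α : ℝ} (hα : α ∈ Set.Ioo (0:ℝ) 1) :
    ∫ x in Set.Ioo (0:ℝ) 1, x ^ (-α) * (1-x) ^ (α-1) = π / Real.sin (π * α) := by
  obtain ⟨h0, h1⟩ := hα
  have hs : (0:ℝ) < 1 - α := by linarith
  have hbc : Complex.Gamma (1-α) * Complex.Gamma α
      = Complex.betaIntegral (1-α) α := by
    have := Complex.Gamma_mul_Gamma_eq_betaIntegral (s := (1-α:ℂ)) (t := (α:ℂ))
      (by simp [Complex.sub_re]; linarith) (by simpa using h0)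
    simpa [Complex.Gamma_one] using this
  have hofreal : Complex.betaIntegral (1-α) α
      = ((∫ x in (0:ℝ)..1, x ^ (-α) * (1-x) ^ (α-1) : ℝ) : ℂ) := by
    rw [Complex.betaIntegral, ← intervalIntegral.integral_ofReal]
    refine intervalIntegral.integral_congr_ae ?_
    have h01 : Set.uIoc (0:ℝ) 1 = Set.Ioc 0 1 := by
      rw [Set.uIoc_of_le zero_le_one]
    filter_upwards with x hx
    rw [h01] at hx
    have hx0 : (0:ℝ) < x := hx.1
    have hx1 : x ≤ 1 := hx.2
    push_cast
    rw [show (1:ℂ) - (α:ℂ) - 1 = ((-α : ℝ):ℂ) by push_cast; ring,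
      show (α:ℂ) - 1 = ((α - 1 : ℝ):ℂ) by push_cast; ring,
      show (1:ℂ) - (x:ℂ) = ((1 - x : ℝ):ℂ) by push_cast; ring,
      ← Complex.ofReal_cpow hx0.le, ← Complex.ofReal_cpow (by linarith)]
  have hreal : Complex.Gamma (1-α) * Complex.Gamma α
      = ((Real.Gamma (1-α) * Real.Gamma α : ℝ) : ℂ) := by
    rw [Complex.ofReal_mul, ← Complex.Gamma_ofReal, ← Complex.Gamma_ofReal]
    push_cast
    ring_nf
  have key : Real.Gamma (1-α) * Real.Gamma α
      = ∫ x in (0:ℝ)..1, x ^ (-α) * (1-x) ^ (α-1) := by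
    have := hreal.symm.trans (hbc.trans hofreal)
    exact_mod_cast this
  rw [intervalIntegral.integral_of_le zero_le_one,
    MeasureTheory.integral_Ioc_eq_integral_Ioo] at key
  rw [← key, mul_comm, Real.Gamma_mul_Gamma_one_sub]

lemma Kval {α : ℝ} (hα : α ∈ Set.Ioo (0:ℝ) 1) :
    ∫ u in Set.Ioi (0:ℝ), u ^ (-α) * (1+u)⁻¹ = π / Real.sin (π * α) := by
  have himg : (fun u : ℝ => u / (1+u)) '' Set.Ioi 0 = Set.Ioo 0 1 := by
    ext x
    constructor
    · rintro ⟨u, hu, rfl⟩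
      have hu0 : (0:ℝ) < u := hu
      have hv : (0:ℝ) < 1 + u := by linarith
      constructor
      · positivity
      · rw [div_lt_one hv]; linarith
    · rintro ⟨hx0, hx1⟩
      have h1x : (0:ℝ) < 1 - x := by linarith
      refine ⟨x / (1 - x), div_pos hx0 h1x, ?_⟩
      field_simp
      ring
  have hd : ∀ u ∈ Set.Ioi (0:ℝ),
      HasDerivWithinAt (fun u : ℝ => u / (1+u)) (((1+u)^2)⁻¹) (Set.Ioi 0) u := by
    intro u hu
    have hv : (1:ℝ) + u ≠ 0 := by simp at hu; positivity
    have : HasDerivAt (fun u : ℝ => u / (1+u))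
        ((1 * (1+u) - u * 1) / (1+u)^2) u :=
      (hasDerivAt_id u).div ((hasDerivAt_id u).const_add 1) hv
    refine this.hasDerivWithinAt.congr_deriv ?_
    ring
  have hinj : Set.InjOn (fun u : ℝ => u / (1+u)) (Set.Ioi 0) := by
    intro a ha b hb h
    simp only at h
    have ha' : (1:ℝ) + a ≠ 0 := by simp at ha; positivity
    have hb' : (1:ℝ) + b ≠ 0 := by simp at hb; positivity
    field_simp at h
    linarith
  have := MeasureTheory.integral_image_eq_integral_abs_deriv_smul measurableSet_Ioi
    hd hinj (fun x => x ^ (-α) * (1-x) ^ (α-1))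
  rw [himg, beta01 hα] at this
  rw [this]
  refine MeasureTheory.setIntegral_congr_fun measurableSet_Ioi fun u hu => ?_
  have hu0 : (0:ℝ) < u := hu
  have hv : (0:ℝ) < 1 + u := by linarith
  have h1 : (1:ℝ) - u / (1+u) = (1+u)⁻¹ := by field_simp; ring
  have h2 : (u / (1+u)) ^ (-α) = u ^ (-α) * (1+u) ^ α := by
    rw [Real.div_rpow hu0.le hv.le, Real.rpow_neg hv.le, div_eq_mul_inv, inv_inv]
  have h3 : ((1+u)⁻¹ : ℝ) ^ (α-1) = (1+u) ^ (1-α) := by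
    rw [← Real.rpow_neg_one (1+u), ← Real.rpow_mul hv.le]
    ring_nf
  rw [h1, h2, h3, abs_of_nonneg (by positivity), smul_eq_mul,
    show (((1+u)^2 : ℝ))⁻¹ = (1+u) ^ (-2:ℝ) by
      rw [Real.rpow_neg hv.le, Real.rpow_two]]
  have e : (1+u) ^ (-2:ℝ) * ((1+u) ^ α * (1+u) ^ (1-α)) = (1+u)⁻¹ := by
    rw [← Real.rpow_add hv, ← Real.rpow_add hv,
      show (-2:ℝ)+(α+(1-α)) = -1 by ring, Real.rpow_neg_one]
  rw [← e]; ring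


lemma rpow_congr_exp (u : ℝ) {a b : ℝ} (h : a = b) : u ^ a = u ^ b := by rw [h]

section
variable {α : ℝ}

lemma kIntegrable (hα : α ∈ Set.Ioo (0:ℝ) 1) :
    IntegrableOn (fun u : ℝ => u ^ (-α) * (1+u)⁻¹) (Set.Ioi 0) := by
  obtain ⟨h0, h1⟩ := hα
  have hmeas : AEStronglyMeasurable (fun u : ℝ => u ^ (-α) * (1+u)⁻¹)
      (volume.restrict (Set.Ioi (0:ℝ))) := by
    refine ContinuousOn.aestronglyMeasurable ?_ measurableSet_Ioi
    intro u hu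
    have hu0 : (0:ℝ) < u := hu
    exact ((Real.continuousAt_rpow_const u _ (Or.inl hu0.ne')).continuousWithinAt.mul
      (((continuousAt_const.add continuousAt_id).inv₀
        (by show (1:ℝ) + u ≠ 0; positivity)).continuousWithinAt))
  rw [show Set.Ioi (0:ℝ) = Set.Ioc 0 1 ∪ Set.Ioi 1 from
    (Set.Ioc_union_Ioi_eq_Ioi zero_le_one).symm]
  refine MeasureTheory.IntegrableOn.union ?_ ?_
  · rw [integrableOn_Ioc_iff_integrableOn_Ioo]
    refine MeasureTheory.Integrable.mono'
      ((intervalIntegral.integrableOn_Ioo_rpow_iff one_pos).mpr (by linarith : (-1:ℝ) < -α))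
      (hmeas.mono_measure (Measure.restrict_mono Set.Ioo_subset_Ioi_self le_rfl)) ?_
    rw [MeasureTheory.ae_restrict_iff' measurableSet_Ioo]
    filter_upwards with u hu
    have hu0 : (0:ℝ) < u := hu.1
    have h2 : (0:ℝ) < 1 + u := by linarith
    rw [Real.norm_eq_abs, abs_of_nonneg (by positivity)]
    nth_rewrite 2 [show u ^ (-α) = u ^ (-α) * 1 by ring]
    gcongr
    rw [inv_le_one_iff₀]; right; linarith
  · refine MeasureTheory.Integrable.mono'
      (integrableOn_Ioi_rpow_of_lt (by linarith : (-1-α:ℝ) < -1) one_pos)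
      (hmeas.mono_measure (Measure.restrict_mono (Set.Ioi_subset_Ioi zero_le_one) le_rfl)) ?_
    rw [MeasureTheory.ae_restrict_iff' measurableSet_Ioi]
    filter_upwards with u hu
    have hu1 : (1:ℝ) < u := hu
    have hu0 : (0:ℝ) < u := by linarith
    have h2 : (0:ℝ) < 1 + u := by linarith
    rw [Real.norm_eq_abs, abs_of_nonneg (by positivity),
      show (-1-α:ℝ) = -α + (-1) by ring, Real.rpow_add hu0, Real.rpow_neg_one]
    gcongr
    linarith

lemma jIntegrable (hα : α ∈ Set.Ioo (0:ℝ) 1) :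
    IntegrableOn (fun u : ℝ => Real.log (1+u) * u ^ (-1-α)) (Set.Ioi 0) := by
  obtain ⟨h0, h1⟩ := hα
  have hmeas : AEStronglyMeasurable (fun u : ℝ => Real.log (1+u) * u ^ (-1-α))
      (volume.restrict (Set.Ioi (0:ℝ))) := by
    refine ContinuousOn.aestronglyMeasurable ?_ measurableSet_Ioi
    intro u hu
    have hu0 : (0:ℝ) < u := hu
    exact ((Real.continuousAt_log (by show (1:ℝ) + u ≠ 0; positivity)).comp
      ((continuousAt_const.add continuousAt_id))).continuousWithinAt.mul
      ((Real.continuousAt_rpow_const u _ (Or.inl hu0.ne')).continuousWithinAt)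
  rw [show Set.Ioi (0:ℝ) = Set.Ioc 0 1 ∪ Set.Ioi 1 from
    (Set.Ioc_union_Ioi_eq_Ioi zero_le_one).symm]
  refine MeasureTheory.IntegrableOn.union ?_ ?_
  · rw [integrableOn_Ioc_iff_integrableOn_Ioo]
    refine MeasureTheory.Integrable.mono'
      ((intervalIntegral.integrableOn_Ioo_rpow_iff one_pos).mpr (by linarith : (-1:ℝ) < -α))
      (hmeas.mono_measure (Measure.restrict_mono Set.Ioo_subset_Ioi_self le_rfl)) ?_
    rw [MeasureTheory.ae_restrict_iff' measurableSet_Ioo]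
    filter_upwards with u hu
    have hu0 : (0:ℝ) < u := hu.1
    have hlog : Real.log (1+u) ≤ u := by
      have := Real.add_one_le_exp (Real.log (1+u))
      have h2 : (0:ℝ) < 1 + u := by linarith
      nlinarith [Real.exp_log h2, Real.log_le_sub_one_of_pos h2]
    have hlog0 : 0 ≤ Real.log (1+u) := Real.log_nonneg (by linarith)
    rw [Real.norm_eq_abs, abs_of_nonneg (by positivity)]
    calc Real.log (1+u) * u ^ (-1-α) ≤ u * u ^ (-1-α) := by gcongr
      _ = u ^ (-α) := by
          rw [show u * u ^ (-1-α) = u ^ (1:ℝ) * u ^ (-1-α) by rw [Real.rpow_one],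
            ← Real.rpow_add hu0]
          exact rpow_congr_exp u (by ring)
  · have hc : (0:ℝ) < α/2 := by linarith
    refine MeasureTheory.Integrable.mono'
      (((integrableOn_Ioi_rpow_of_lt (show (-1-α/2:ℝ) < -1 by linarith) one_pos).const_mul
        ((2:ℝ) ^ (α/2) * (2/α)))) 
      (hmeas.mono_measure (Measure.restrict_mono (Set.Ioi_subset_Ioi zero_le_one) le_rfl)) ?_
    rw [MeasureTheory.ae_restrict_iff' measurableSet_Ioi]
    filter_upwards with u hu
    have hu1 : (1:ℝ) < u := hu
    have hu0 : (0:ℝ) < u := by linarith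
    have hlog0 : 0 ≤ Real.log (1+u) := Real.log_nonneg (by linarith)
    rw [Real.norm_eq_abs, abs_of_nonneg (by positivity)]
    have hlog : Real.log (1+u) ≤ (2:ℝ) ^ (α/2) * (2/α) * u ^ (α/2) := by
      calc Real.log (1+u) ≤ (1+u) ^ (α/2) / (α/2) :=
            Real.log_le_rpow_div (by linarith) hc
        _ ≤ (2*u) ^ (α/2) / (α/2) := by
            gcongr
            linarith
        _ = (2:ℝ) ^ (α/2) * (2/α) * u ^ (α/2) := by
            rw [Real.mul_rpow (by norm_num) hu0.le]
            field_simp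
    calc Real.log (1+u) * u ^ (-1-α)
        ≤ ((2:ℝ) ^ (α/2) * (2/α) * u ^ (α/2)) * u ^ (-1-α) := by
          gcongr
      _ = (2:ℝ) ^ (α/2) * (2/α) * u ^ (-1-α/2) := by
          rw [mul_assoc, ← Real.rpow_add hu0]; ring_nf

lemma Jval (hα : α ∈ Set.Ioo (0:ℝ) 1) :
    ∫ u in Set.Ioi (0:ℝ), Real.log (1+u) * u ^ (-1-α)
      = π / (α * Real.sin (α * π)) := by
  obtain ⟨h0, h1⟩ := hα
  set f : ℝ → ℝ := fun u => -(1/α) * (u ^ (-α) * Real.log (1+u)) with hf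
  set f' : ℝ → ℝ := fun u =>
    Real.log (1+u) * u ^ (-1-α) - (1/α) * (u ^ (-α) * (1+u)⁻¹) with hf'
  have hderiv : ∀ u ∈ Set.Ioi (0:ℝ), HasDerivAt f (f' u) u := by
    intro u hu
    have hu0 : (0:ℝ) < u := hu
    have h2 : (0:ℝ) < 1 + u := by linarith
    have d1 : HasDerivAt (fun u : ℝ => u ^ (-α)) (-α * u ^ (-α-1)) u :=
      Real.hasDerivAt_rpow_const (Or.inl hu0.ne')
    have d2 : HasDerivAt (fun u : ℝ => Real.log (1+u)) (1/(1+u)) u := by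
      simpa using (((hasDerivAt_id u).const_add 1).log h2.ne')
    have := ((d1.mul d2).const_mul (-(1/α)))
    refine this.congr_deriv ?_
    simp only [hf']
    rw [show (-1-α : ℝ) = -α-1 by ring]
    field_simp
    ring
  have hcont : ContinuousWithinAt f (Set.Ici 0) 0 := by
    rw [ContinuousWithinAt]
    have hfz : f 0 = 0 := by
      simp [hf, Real.zero_rpow (by linarith : -α ≠ 0)]
    rw [hfz]
    have h1a : Tendsto (fun u : ℝ => u ^ (1-α)) (nhdsWithin 0 (Set.Ici 0)) (𝓝 0) := by
      have := (Real.continuousAt_rpow_const 0 (1-α) (Or.inr (by linarith))).continuousWithinAt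
        (s := Set.Ici (0:ℝ))
      rwa [ContinuousWithinAt, Real.zero_rpow (by linarith : (1-α) ≠ 0)] at this
    have key : Tendsto (fun u : ℝ => u ^ (-α) * Real.log (1+u))
        (nhdsWithin 0 (Set.Ici 0)) (𝓝 0) := by
      apply squeeze_zero' ?_ ?_ h1a
      · filter_upwards [self_mem_nhdsWithin] with u hu
        have hu0 : (0:ℝ) ≤ u := hu
        have : 0 ≤ Real.log (1+u) := Real.log_nonneg (by linarith)
        positivity
      · filter_upwards [self_mem_nhdsWithin] with u hu
        have hu0 : (0:ℝ) ≤ u := hu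
        rcases eq_or_lt_of_le hu0 with h|h
        · simp [← h, Real.zero_rpow (by linarith : -α ≠ 0),
            Real.zero_rpow (by linarith : (1-α) ≠ 0)]
        · have hlog : Real.log (1+u) ≤ u := by
            nlinarith [Real.log_le_sub_one_of_pos (show (0:ℝ) < 1+u by linarith)]
          calc u ^ (-α) * Real.log (1+u) ≤ u ^ (-α) * u := by
                gcongr
            _ = u ^ (1-α) := by
                rw [mul_comm, show u * u ^ (-α) = u ^ (1:ℝ) * u ^ (-α) by
                  rw [Real.rpow_one], ← Real.rpow_add h]
                exact rpow_congr_exp u (by ring)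
    simpa [hf] using key.const_mul (-(1/α))
  have htop : Tendsto f atTop (𝓝 0) := by
    have hlittle : Tendsto (fun u : ℝ => u ^ (-α) * Real.log (1+u)) atTop (𝓝 0) := by
      have h2 : Tendsto (fun u : ℝ => 2 * (Real.log u / u ^ α)) atTop (𝓝 0) := by
        simpa using ((isLittleO_log_rpow_atTop h0).tendsto_div_nhds_zero).const_mul 2
      apply squeeze_zero' ?_ ?_ h2
      · filter_upwards [eventually_ge_atTop 1] with u hu
        have : 0 ≤ Real.log (1+u) := Real.log_nonneg (by linarith)
        positivity
      · filter_upwards [eventually_ge_atTop 2] with u hu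
        have hu0 : (0:ℝ) < u := by linarith
        have hlog : Real.log (1+u) ≤ 2 * Real.log u := by
          calc Real.log (1+u) ≤ Real.log (u*u) := by
                apply Real.log_le_log (by linarith)
                nlinarith
            _ = 2 * Real.log u := by
                rw [Real.log_mul hu0.ne' hu0.ne']; ring
        rw [Real.rpow_neg hu0.le]
        rw [inv_mul_eq_div, div_le_iff₀ (by positivity)]
        rw [mul_comm (2:ℝ) _, div_mul_eq_mul_div, div_mul_eq_mul_div,
          le_div_iff₀ (by positivity)] at *
        nlinarith [Real.rpow_pos_of_pos hu0 α]
    simpa [hf] using hlittle.const_mul (-(1/α))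
  have hfint : IntegrableOn f' (Set.Ioi 0) := by
    exact (jIntegrable ⟨h0, h1⟩).sub ((kIntegrable ⟨h0, h1⟩).const_mul (1/α))
  have := MeasureTheory.integral_Ioi_of_hasDerivAt_of_tendsto hcont hderiv hfint htop
  have hfz : f 0 = 0 := by simp [hf, Real.zero_rpow (by linarith : -α ≠ 0)]
  rw [hfz, sub_zero] at this
  have hsplit : ∫ u in Set.Ioi (0:ℝ), f' u
      = (∫ u in Set.Ioi (0:ℝ), Real.log (1+u) * u ^ (-1-α))
        - (1/α) * ∫ u in Set.Ioi (0:ℝ), u ^ (-α) * (1+u)⁻¹ := by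
    rw [MeasureTheory.integral_sub (jIntegrable ⟨h0, h1⟩)
      ((kIntegrable ⟨h0, h1⟩).const_mul (1/α)), MeasureTheory.integral_const_mul]
  rw [this] at hsplit
  rw [Kval ⟨h0, h1⟩] at hsplit
  have : ∫ u in Set.Ioi (0:ℝ), Real.log (1+u) * u ^ (-1-α)
      = (1/α) * (π / Real.sin (π * α)) := by linarith
  rw [this, mul_comm π α]
  field_simp

lemma scaled (hα : α ∈ Set.Ioo (0:ℝ) 1) {y : ℝ} (hy : 0 < y) :
    IntegrableOn (fun z : ℝ => (Real.log (y+z) - Real.log y) * z ^ (-1-α))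
      (Set.Ioi 0) ∧
    ∫ z in Set.Ioi (0:ℝ), (Real.log (y+z) - Real.log y) * z ^ (-1-α)
      = y ^ (-α) * (π / (α * Real.sin (α * π))) := by
  set F : ℝ → ℝ := fun z => (Real.log (y+z) - Real.log y) * z ^ (-1-α) with hF
  have hpt : ∀ u ∈ Set.Ioi (0:ℝ),
      F (y*u) = y ^ (-1-α) * (Real.log (1+u) * u ^ (-1-α)) := by
    intro u hu
    have hu0 : (0:ℝ) < u := hu
    simp only [hF]
    rw [show y + y*u = y*(1+u) by ring, Real.log_mul hy.ne' (by positivity),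
      Real.mul_rpow hy.le hu0.le]
    ring
  have hcomp : IntegrableOn (fun u : ℝ => F (y*u)) (Set.Ioi 0) := by
    refine MeasureTheory.Integrable.congr
      ((jIntegrable hα).const_mul (y ^ (-1-α))) ?_
    filter_upwards [MeasureTheory.ae_restrict_mem measurableSet_Ioi] with u hu
    exact (hpt u hu).symm
  have hint : IntegrableOn F (Set.Ioi 0) := by
    have := (integrableOn_Ioi_comp_mul_left_iff F 0 hy).mp hcomp
    rwa [mul_zero] at this
  refine ⟨hint, ?_⟩
  have h := MeasureTheory.integral_comp_mul_left_Ioi F 0 hy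
  rw [mul_zero] at h
  have h2 : ∫ u in Set.Ioi (0:ℝ), F (y*u)
      = y ^ (-1-α) * (π / (α * Real.sin (α * π))) := by
    rw [MeasureTheory.setIntegral_congr_fun measurableSet_Ioi hpt,
      MeasureTheory.integral_const_mul, Jval hα]
  rw [h2] at h
  have hyne : y ≠ 0 := hy.ne'
  have : (∫ z in Set.Ioi (0:ℝ), F z)
      = y * y ^ (-1-α) * (π / (α * Real.sin (α * π))) := by
    have h3 := congrArg (fun t => y * t) h
    simp only [smul_eq_mul, ← mul_assoc, mul_inv_cancel₀ hyne, one_mul] at h3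
    exact h3.symm
  rw [this, show y * y ^ (-1-α) = y ^ (-α) by
    rw [show y * y ^ (-1-α) = y ^ (1:ℝ) * y ^ (-1-α) by rw [Real.rpow_one],
      ← Real.rpow_add hy]
    exact rpow_congr_exp y (by ring)]

end

theorem stmt12 (n : ℕ) (hn : 9 ≤ n) (A a α : ℝ) (hA : 1 < A) (ha : 0 < a)
    (hα : α ∈ Set.Ioo (0:ℝ) 1) :
    ∀ y : ℝ, 1 / (n : ℝ) ≤ y →
      ∫ z in Set.Ioi A,
          (Real.log (Real.log ((n : ℝ) ^ 2 * (y + z)))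
            - Real.log (Real.log ((n : ℝ) ^ 2 * y))) * z ^ (-1 - α)
        ≤ (Real.log ((n : ℝ) ^ 2 * y))⁻¹
            * (Real.pi / (α * Real.sin (α * Real.pi))) * y ^ (-α) := by
  intro y hy
  obtain ⟨hα0, hα1⟩ := hα
  have hn0 : (0:ℝ) < n := by positivity
  have hn9 : (9:ℝ) ≤ n := by exact_mod_cast hn
  have hy0 : (0:ℝ) < y := lt_of_lt_of_le (by positivity) hy
  set L : ℝ := Real.log ((n:ℝ) ^ 2 * y) with hLdef
  have hn2y : (9:ℝ) ≤ (n:ℝ) ^ 2 * y := by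
    have : (n:ℝ) ^ 2 * (1/n) ≤ (n:ℝ)^2 * y := by gcongr
    have h2 : (n:ℝ)^2 * (1/n) = n := by field_simp
    nlinarith
  have hL2 : (2:ℝ) ≤ L := by
    rw [hLdef]
    have := Real.log_le_log (by norm_num : (0:ℝ) < 9) hn2y
    have h9 : (2:ℝ) ≤ Real.log 9 := by
      rw [show (9:ℝ) = 3^2 by norm_num, Real.log_pow]
      have : (1:ℝ) ≤ Real.log 3 := by
        rw [show (1:ℝ) = Real.log (Real.exp 1) by rw [Real.log_exp]]
        apply Real.log_le_log (Real.exp_pos 1)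
        have := Real.exp_one_lt_d9
        linarith
      push_cast
      linarith
    linarith
  have hL0 : (0:ℝ) < L := by linarith
  -- the comparison function
  set F : ℝ → ℝ := fun z => (Real.log (y+z) - Real.log y) * z ^ (-1-α) with hF
  obtain ⟨hFint, hFval⟩ := scaled ⟨hα0, hα1⟩ hy0
  have hA0 : (0:ℝ) < A := by linarith
  have hsub : Set.Ioi A ⊆ Set.Ioi (0:ℝ) := Set.Ioi_subset_Ioi hA0.le
  have hFintA : IntegrableOn (fun z => L⁻¹ * F z) (Set.Ioi A) :=
    ((hFint.mono_set hsub).const_mul _)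
  have hFnonneg : ∀ z ∈ Set.Ioi (0:ℝ), 0 ≤ F z := by
    intro z hz
    have hz0 : (0:ℝ) < z := hz
    have : Real.log y ≤ Real.log (y+z) := Real.log_le_log hy0 (by linarith)
    have hzp : (0:ℝ) ≤ z ^ (-1-α) := Real.rpow_nonneg hz0.le _
    simp only [hF]
    nlinarith
  -- pointwise bound on Ioi A
  have hbound : ∀ z ∈ Set.Ioi A,
      (Real.log (Real.log ((n : ℝ) ^ 2 * (y + z))) - Real.log L) * z ^ (-1 - α)
        ≤ L⁻¹ * F z := by
    intro z hz
    have hz1 : A < z := hz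
    have hz0 : (0:ℝ) < z := by linarith
    have hyz : (0:ℝ) < y + z := by linarith
    set B : ℝ := Real.log ((n:ℝ) ^ 2 * (y+z)) with hBdef
    have hLB : L ≤ B := by
      rw [hLdef, hBdef]
      apply Real.log_le_log (by positivity)
      gcongr <;> linarith
    have hB0 : (0:ℝ) < B := by linarith
    have hdiff : B - L = Real.log (y+z) - Real.log y := by
      rw [hBdef, hLdef, Real.log_mul (by positivity) hyz.ne',
        Real.log_mul (by positivity) hy0.ne']
      ring
    have hlog : Real.log B - Real.log L ≤ (B - L) / L := by
      rw [← Real.log_div hB0.ne' hL0.ne']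
      have := Real.log_le_sub_one_of_pos (show (0:ℝ) < B/L by positivity)
      have h2 : B/L - 1 = (B - L)/L := by field_simp
      linarith
    have hzp : (0:ℝ) ≤ z ^ (-1-α) := Real.rpow_nonneg hz0.le _
    calc (Real.log B - Real.log L) * z ^ (-1-α)
        ≤ ((B - L)/L) * z ^ (-1-α) := by gcongr
      _ = L⁻¹ * F z := by
          rw [hdiff, hF]
          field_simp
  -- assemble
  calc ∫ z in Set.Ioi A,
        (Real.log (Real.log ((n : ℝ) ^ 2 * (y + z))) - Real.log L) * z ^ (-1 - α)
      ≤ ∫ z in Set.Ioi A, L⁻¹ * F z := by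
        refine MeasureTheory.integral_mono_of_nonneg ?_ hFintA ?_
        · filter_upwards [MeasureTheory.ae_restrict_mem measurableSet_Ioi] with z hz
          have hz0 : (0:ℝ) < z := lt_trans hA0 hz
          have hyz : (0:ℝ) < y + z := by linarith
          have hLB : L ≤ Real.log ((n:ℝ)^2 * (y+z)) := by
            rw [hLdef]
            apply Real.log_le_log (by positivity)
            gcongr <;> linarith
          have : Real.log L ≤ Real.log (Real.log ((n:ℝ)^2 * (y+z))) :=
            Real.log_le_log hL0 hLB
          have hzp : (0:ℝ) ≤ z ^ (-1-α) := Real.rpow_nonneg hz0.le _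
          have h3 : (-1-α : ℝ) = -1 - α := by ring
          simp only [Pi.zero_apply]
          nlinarith
        · filter_upwards [MeasureTheory.ae_restrict_mem measurableSet_Ioi] with z hz
          exact hbound z hz
    _ ≤ ∫ z in Set.Ioi (0:ℝ), L⁻¹ * F z := by
        apply MeasureTheory.setIntegral_mono_set (hFint.const_mul _)
        · filter_upwards [MeasureTheory.ae_restrict_mem measurableSet_Ioi] with z hz
          have := hFnonneg z hz
          simp only [Pi.zero_apply]
          positivity
        · exact HasSubset.Subset.eventuallyLE hsub
    _ = L⁻¹ * (Real.pi / (α * Real.sin (α * Real.pi))) * y ^ (-α) := by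
        rw [MeasureTheory.integral_const_mul, hFval]
        ring
end
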